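/- arXiv:1207.5169 — 11 statements merged into one kernel-verified Lean document; each statement's English description precedes it below -/
import Mathlib

section
/- Let (G_i)_{i ∈ I} be a family of profinite groups such that for all i ≠ j, no finite nonabelian simple group is a continuous quotient of both G_i and G_j (i.e., there is no finite group S, simple and nonabelian, admitting continuous surjective group homomorphisms G_i → S and G_j → S, where S carries the discrete topology). Let G = ∏_{i ∈ I} G_i with the product topology, and let H ≤ G be a closed subgroup such that (a) for every i ∈ I the projection G → G_i maps H onto G_i, and (b) the quotient map G → G/N maps H onto G/N, where N is the topological closure of the commutator subgroup [G,G] of G. Then H = G. -/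
open Function

section SimpleTransfer

lemma mySimpleTransfer {A B : Type*} [Group A] [Group B] (e : A ≃* B) [IsSimpleGroup A] :
    IsSimpleGroup B := by
  haveI : Nontrivial B := by
    obtain ⟨a, b, hab⟩ := exists_pair_ne A
    exact ⟨⟨e a, e b, fun h => hab (e.injective h)⟩⟩
  constructor
  intro N hN
  have hN' : (N.comap e.toMonoidHom).Normal := hN.comap _
  rcases IsSimpleGroup.eq_bot_or_eq_top_of_normal (N.comap e.toMonoidHom) hN' with h | h
  · left
    ext b
    simp only [Subgroup.mem_bot]
    constructor
    · intro hb
      have h2 : e.symm b ∈ N.comap e.toMonoidHom := by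
        simp [Subgroup.mem_comap, hb]
      rw [h, Subgroup.mem_bot] at h2
      have := congrArg e h2
      simpa using this
    · rintro rfl; exact N.one_mem
  · right
    ext b
    simp only [Subgroup.mem_top, iff_true]
    have h2 : e.symm b ∈ N.comap e.toMonoidHom := by rw [h]; trivial
    simpa using h2

/-- Every finite nontrivial group has a simple quotient. -/
lemma myExistsSimpleQuotient_aux (n : ℕ) :
    ∀ (C : Type u) [Group C] [Finite C] [Nontrivial C], Nat.card C ≤ n →
    ∃ (S : Type u) (_ : Group S) (_ : Finite S) (_ : IsSimpleGroup S) (f : C →* S),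
      Surjective f := by
  induction n with
  | zero =>
    intro C _ _ _ h
    have := Nat.card_pos (α := C)
    omega
  | succ n ih =>
    intro C _ _ _ hcard
    by_cases hs : IsSimpleGroup C
    · exact ⟨C, ‹_›, ‹_›, hs, MonoidHom.id C, surjective_id⟩
    · have hex : ∃ N : Subgroup C, N.Normal ∧ N ≠ ⊥ ∧ N ≠ ⊤ := by
        by_contra hcon
        push_neg at hcon
        exact hs ⟨fun N hN => or_iff_not_imp_left.mpr (hcon N hN)⟩
      obtain ⟨N, hN, hbot, htop⟩ := hex
      haveI := hN
      haveI : Nontrivial (C ⧸ N) := by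
        obtain ⟨x, hx⟩ : ∃ x : C, x ∉ N := by
          by_contra hcon
          push_neg at hcon
          exact htop ((Subgroup.eq_top_iff' N).mpr hcon)
        exact ⟨⟨QuotientGroup.mk x, 1, by
          simpa [QuotientGroup.eq_one_iff] using hx⟩⟩
      have hlt : Nat.card (C ⧸ N) ≤ n := by
        have h1 : Nat.card C = Nat.card (C ⧸ N) * Nat.card N :=
          Subgroup.card_eq_card_quotient_mul_card_subgroup N
        have h2 : 1 < Nat.card N := (Subgroup.one_lt_card_iff_ne_bot (H := N)).mpr hbot
        have h3 : 0 < Nat.card (C ⧸ N) := Nat.card_pos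
        nlinarith
      obtain ⟨S, _, _, _, f, hf⟩ := ih (C ⧸ N) hlt
      exact ⟨S, ‹_›, ‹_›, ‹_›, f.comp (QuotientGroup.mk' N),
        hf.comp (QuotientGroup.mk'_surjective N)⟩

lemma myExistsSimpleQuotient (C : Type u) [Group C] [Finite C] [Nontrivial C] :
    ∃ (S : Type u) (_ : Group S) (_ : Finite S) (_ : IsSimpleGroup S) (f : C →* S),
      Surjective f :=
  myExistsSimpleQuotient_aux (Nat.card C) C le_rfl

/-- A surjection from a finite product onto a simple group restricts to a surjection
on some single factor. -/
lemma myPiFactor {ι : Type*} [Finite ι] [DecidableEq ι] (C : ι → Type*) [∀ i, Group (C i)]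
    {S : Type*} [Group S] [IsSimpleGroup S] (π : (∀ i, C i) →* S) (hπ : Surjective π) :
    ∃ i, Surjective (π.comp (MonoidHom.mulSingle C i)) := by
  haveI : Fintype ι := Fintype.ofFinite ι
  by_contra hcon
  push_neg at hcon
  have h1 : ∀ (i) (x : C i), π (Pi.mulSingle i x) = 1 := by
    intro i x
    have hR : ((π.comp (MonoidHom.mulSingle C i)).range).Normal := by
      constructor
      rintro s ⟨x, rfl⟩ g
      obtain ⟨y, rfl⟩ := hπ g
      refine ⟨y i * x * (y i)⁻¹, ?_⟩
      have hconj : Pi.mulSingle i (y i * x * (y i)⁻¹) = y * Pi.mulSingle i x * y⁻¹ := by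
        funext k
        by_cases hk : k = i
        · subst hk; simp
        · simp [Pi.mulSingle_eq_of_ne hk]
      rw [MonoidHom.comp_apply, MonoidHom.mulSingle_apply, hconj, map_mul, map_mul, map_inv]
      rfl
    rcases IsSimpleGroup.eq_bot_or_eq_top_of_normal _ hR with h | h
    · have h2 : π (Pi.mulSingle i x) ∈ ((π.comp (MonoidHom.mulSingle C i)).range) :=
        ⟨x, rfl⟩
      rw [h] at h2
      simpa using h2
    · exact absurd (MonoidHom.range_eq_top.mp h) (hcon i)
  -- now show π is trivial, contradiction
  have h2 : ∀ (s : Finset ι) (y : ∀ i, C i), (∀ i ∉ s, y i = 1) → π y = 1 := by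
    intro s
    induction s using Finset.induction_on with
    | empty =>
      intro y hy
      have : y = 1 := funext fun i => hy i (by simp)
      rw [this, map_one]
    | insert a s ha ih =>
      intro y hy
      have hdec : y = Pi.mulSingle a (y a) * Function.update y a 1 := by
        funext k
        by_cases hk : k = a
        · subst hk; simp
        · simp [Pi.mulSingle_eq_of_ne hk, Function.update_of_ne hk]
      rw [hdec, map_mul, h1, one_mul]
      apply ih
      intro i hi
      by_cases hia : i = a
      · subst hia; simp
      · rw [Function.update_of_ne hia]
        exact hy i (by simp [hia, hi])
  obtain ⟨s, hs⟩ : ∃ s : S, s ≠ 1 := exists_ne 1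
  obtain ⟨y, rfl⟩ := hπ s
  exact hs (h2 Finset.univ y (fun i hi => absurd (Finset.mem_univ i) hi))

end SimpleTransfer

section Core

open Subgroup

/-- Key finite lemma: a proper subgroup of `A × B` with surjective projections gives a
common simple quotient through which it factors as a graph. -/
lemma myCore {A : Type u} {B : Type v} [Group A] [Group B] [Finite A]
    (K : Subgroup (A × B))
    (hA : ∀ a : A, ∃ p ∈ K, p.1 = a) (hB : ∀ b : B, ∃ p ∈ K, p.2 = b) (hne : K ≠ ⊤) :
    ∃ (S : Type u) (_ : Group S) (_ : Finite S) (_ : IsSimpleGroup S)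
      (f : A →* S) (g : B →* S), Surjective f ∧ Surjective g ∧
        ∀ p ∈ K, f p.1 = g p.2 := by
  have hA' : Surjective (Prod.fst ∘ K.subtype) := fun a => by
    obtain ⟨p, hp, h⟩ := hA a; exact ⟨⟨p, hp⟩, h⟩
  have hB' : Surjective (Prod.snd ∘ K.subtype) := fun b => by
    obtain ⟨p, hp, h⟩ := hB b; exact ⟨⟨p, hp⟩, h⟩
  haveI hfstn := Subgroup.normal_goursatFst hA'
  haveI hsndn := Subgroup.normal_goursatSnd hB'
  obtain ⟨e, he⟩ := Subgroup.goursat_surjective hA' hB'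
  haveI : Nontrivial (A ⧸ K.goursatFst) := by
    obtain ⟨a, ha⟩ : ∃ a : A, a ∉ K.goursatFst := by
      by_contra hcon; push_neg at hcon
      apply hne
      rw [eq_top_iff]; rintro ⟨a, b⟩ -
      obtain ⟨⟨p, hp⟩, hpb⟩ := hB' b
      have h1 : ((a * p.1⁻¹, (1 : B)) : A × B) ∈ K :=
        Subgroup.mem_goursatFst.mp (hcon _)
      have h2 := mul_mem h1 hp
      have h3 : ((a * p.1⁻¹, (1 : B)) : A × B) * p = (a, b) := by
        have : p.2 = b := hpb
        rw [Prod.mk_mul_mk]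
        simp [this]
      rwa [h3] at h2
    exact ⟨⟨QuotientGroup.mk a, 1, by simpa [QuotientGroup.eq_one_iff] using ha⟩⟩
  haveI : Finite (A ⧸ K.goursatFst) := Quotient.finite _
  obtain ⟨S, iS, iF, iSimp, q, hq⟩ := myExistsSimpleQuotient (A ⧸ K.goursatFst)
  refine ⟨S, iS, iF, iSimp, q.comp (QuotientGroup.mk' _),
    q.comp (e.symm.toMonoidHom.comp (QuotientGroup.mk' _)), ?_, ?_, ?_⟩
  · exact hq.comp (QuotientGroup.mk'_surjective _)
  · exact hq.comp (e.symm.surjective.comp (QuotientGroup.mk'_surjective _))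
  · rintro ⟨a, b⟩ hp
    have h1 : ((QuotientGroup.mk a : A ⧸ K.goursatFst),
        (QuotientGroup.mk b : B ⧸ K.goursatSnd)) ∈ e.toMonoidHom.graph := by
      rw [← he]; exact ⟨⟨(a, b), hp⟩, rfl⟩
    have h2 : e (QuotientGroup.mk a) = QuotientGroup.mk b := by
      simpa [MonoidHom.mem_graph] using h1
    show q (QuotientGroup.mk a) = q (e.symm (QuotientGroup.mk b))
    rw [← h2, e.symm_apply_apply]

end Core


/-- If `(G i)` is a family of profinite groups such that no finite nonabelian simple
group is a continuous quotient of two distinct members, and `H` is a closed subgroup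
of the product that surjects onto each factor and onto the quotient by the closure of
the commutator subgroup, then `H` is the whole product. -/
theorem stmt0 {I : Type*} (G : I → Type*) [∀ i, Group (G i)]
    [∀ i, TopologicalSpace (G i)] [∀ i, IsTopologicalGroup (G i)]
    [∀ i, CompactSpace (G i)] [∀ i, T2Space (G i)]
    [∀ i, TotallyDisconnectedSpace (G i)]
    (hquo : ∀ i j : I, i ≠ j →
      ∀ (S : Type) [Group S] [Finite S] [IsSimpleGroup S],
        (¬ ∀ a b : S, a * b = b * a) →
        ¬ ((∃ f : G i →* S, @Continuous (G i) S _ ⊥ f ∧ Function.Surjective f) ∧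
           (∃ g : G j →* S, @Continuous (G j) S _ ⊥ g ∧ Function.Surjective g)))
    (H : Subgroup (∀ i, G i)) (hclosed : IsClosed (H : Set (∀ i, G i)))
    (hproj : ∀ i, H.map (Pi.evalMonoidHom G i) = ⊤)
    (hab : H.map (QuotientGroup.mk' (commutator (∀ i, G i)).topologicalClosure) = ⊤) :
    H = ⊤ := by
  classical
  have key : ∀ (F : Finset I) (N : ∀ i, Subgroup (G i)),
      (∀ i, (N i).Normal) → (∀ i, IsOpen ((N i : Set (G i)))) →
      ∀ x : ∀ i, G i, ∃ h ∈ H, ∀ i ∈ F,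
        (QuotientGroup.mk (h i) : G i ⧸ N i) = QuotientGroup.mk (x i) := by
    intro F
    induction F using Finset.induction_on with
    | empty =>
      intro N _ _ x
      exact ⟨1, H.one_mem, fun i hi => absurd hi (Finset.notMem_empty i)⟩
    | @insert j F hj ih =>
      intro N hNn hNo x
      haveI : ∀ i, (N i).Normal := hNn
      haveI hdisc : ∀ i, DiscreteTopology (G i ⧸ N i) := fun i =>
        QuotientGroup.discreteTopology (hNo i)
      haveI hfin : ∀ i, Finite (G i ⧸ N i) := fun i =>
        Subgroup.quotient_finite_of_isOpen _ (hNo i)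
      let A := G j ⧸ N j
      let B := ∀ i : F, G i.1 ⧸ N i.1
      let χ : (∀ i, G i) →* A := (QuotientGroup.mk' (N j)).comp (Pi.evalMonoidHom G j)
      let ψ : (∀ i, G i) →* B :=
        { toFun := fun y i => QuotientGroup.mk (y i.1)
          map_one' := by funext i; rfl
          map_mul' := fun a b => by funext i; rfl }
      let Φ : (∀ i, G i) →* A × B := χ.prod ψ
      let K := H.map Φ
      have hKA : ∀ a : A, ∃ p ∈ K, p.1 = a := by
        intro a
        obtain ⟨gj, rfl⟩ := QuotientGroup.mk'_surjective (N j) a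
        have hmem : gj ∈ Subgroup.map (Pi.evalMonoidHom G j) H := by
          rw [hproj j]; trivial
        obtain ⟨h, hh, hhj⟩ := hmem
        refine ⟨Φ h, Subgroup.mem_map_of_mem _ hh, ?_⟩
        show (QuotientGroup.mk' (N j)) (h j) = (QuotientGroup.mk' (N j)) gj
        rw [show h j = gj from hhj]
      have hKB : ∀ b : B, ∃ p ∈ K, p.2 = b := by
        intro b
        let x0 : ∀ i, G i := fun i => if hi : i ∈ F then (b ⟨i, hi⟩).out else 1
        obtain ⟨h, hh, hhF⟩ := ih N hNn hNo x0
        refine ⟨Φ h, Subgroup.mem_map_of_mem _ hh, ?_⟩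
        funext i
        have h1 := hhF i.1 i.2
        show QuotientGroup.mk (h i.1) = b i
        rw [h1]
        show QuotientGroup.mk (x0 i.1) = b i
        have : x0 i.1 = (b ⟨i.1, i.2⟩).out := dif_pos i.2
        rw [this]
        exact QuotientGroup.out_eq' _
      by_cases hKtop : K = ⊤
      · have hx : Φ x ∈ K := by rw [hKtop]; trivial
        obtain ⟨h, hh, hΦ⟩ := hx
        refine ⟨h, hh, ?_⟩
        intro i hi
        rcases Finset.mem_insert.mp hi with rfl | hiF
        · exact congrArg Prod.fst hΦ
        · exact congrFun (congrArg Prod.snd hΦ) ⟨i, hiF⟩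
      · exfalso
        haveI : Finite A := hfin j
        obtain ⟨S, iS, iF2, iSimp, f, g, hfs, hgs, hgraph⟩ := myCore K hKA hKB hKtop
        by_cases hcomm : ∀ a b : S, a * b = b * a
        · -- abelian common quotient: contradicts surjectivity onto abelianization
          letI : CommGroup S := { (inferInstance : Group S) with mul_comm := hcomm }
          letI : TopologicalSpace S := ⊥
          haveI : DiscreteTopology S := ⟨rfl⟩
          let ψS : (∀ i, G i) →* S := (f.comp χ) / (g.comp ψ)
          have hψS : ∀ y, ψS y = f (χ y) * (g (ψ y))⁻¹ := fun y => by
            simp [ψS, div_eq_mul_inv]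
          have hcont : Continuous ψS := by
            have hχ : Continuous χ := continuous_quotient_mk'.comp (continuous_apply j)
            have hψ : Continuous ψ := by
              apply continuous_pi
              intro i
              exact continuous_quotient_mk'.comp (continuous_apply i.1)
            have hpair : Continuous (fun y => (χ y, ψ y)) := hχ.prodMk hψ
            have heq : ⇑ψS = (fun p : A × B => f p.1 * (g p.2)⁻¹) ∘ (fun y => (χ y, ψ y)) :=
              funext fun y => hψS y
            rw [heq]
            exact Continuous.comp continuous_of_discreteTopology hpair
          have hker : (commutator (∀ i, G i)).topologicalClosure ≤ ψS.ker := by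
            apply Subgroup.topologicalClosure_minimal
            · rw [commutator_def, Subgroup.commutator_le]
              intro g1 _ g2 _
              rw [MonoidHom.mem_ker, map_commutatorElement]
              exact commutatorElement_eq_one_iff_mul_comm.mpr (mul_comm _ _)
            · have : (ψS.ker : Set (∀ i, G i)) = ψS ⁻¹' {1} := rfl
              rw [this]
              exact (isClosed_discrete {1}).preimage hcont
          have htriv : ∀ s : S, s = 1 := by
            intro s
            obtain ⟨a, ha⟩ := hfs s
            obtain ⟨gj, hgj⟩ := QuotientGroup.mk'_surjective (N j) a
            let x0 : ∀ i, G i := Pi.mulSingle j gj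
            have hx0 : ψS x0 = s := by
              rw [hψS]
              have h1 : χ x0 = a := by
                show (QuotientGroup.mk' (N j)) (x0 j) = a
                rw [show x0 j = gj from Pi.mulSingle_eq_same j gj]
                exact hgj
              have h2 : ψ x0 = 1 := by
                funext i
                have hnej : i.1 ≠ j := fun hh => hj (hh ▸ i.2)
                show (QuotientGroup.mk (x0 i.1) : G i.1 ⧸ N i.1) = 1
                rw [show x0 i.1 = 1 from Pi.mulSingle_eq_of_ne hnej gj]
                rfl
              rw [h1, h2, map_one, inv_one, mul_one, ha]
            have hx1 : (QuotientGroup.mk' (commutator (∀ i, G i)).topologicalClosure) x0 ∈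
                H.map (QuotientGroup.mk' (commutator (∀ i, G i)).topologicalClosure) := by
              rw [hab]; trivial
            obtain ⟨h, hh, hhx⟩ := hx1
            have h4 : h⁻¹ * x0 ∈ (commutator (∀ i, G i)).topologicalClosure :=
              QuotientGroup.eq.mp hhx
            have h5 := hker h4
            rw [MonoidHom.mem_ker, map_mul, map_inv] at h5
            have h3 : ψS h = ψS x0 := by
              have := mul_eq_one_iff_eq_inv.mp h5
              rw [← inv_inv (ψS x0), ← this, inv_inv]
            have h6 : ψS h = 1 := by
              have hg := hgraph (Φ h) (Subgroup.mem_map_of_mem _ hh)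
              rw [hψS]
              rw [show f (χ h) = g (ψ h) from hg, mul_inv_cancel]
            rw [← hx0, ← h3, h6]
          obtain ⟨s, hs⟩ := exists_ne (1 : S)
          exact hs (htriv s)
        · -- nonabelian simple common quotient: contradicts hquo
          obtain ⟨i0, hi0⟩ := myPiFactor (fun i : F => G i.1 ⧸ N i.1) g hgs
          have hne' : (j : I) ≠ i0.1 := fun hh => hj (hh ▸ i0.2)
          haveI : Small.{0} S := Countable.toSmall S
          let S0 : Type := Shrink.{0} S
          let e : S0 ≃* S :=
            { toEquiv := (equivShrink S).symm, map_mul' := equivShrink_symm_mul }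
          haveI : Finite S0 := Finite.of_equiv S (equivShrink S)
          haveI : IsSimpleGroup S0 := mySimpleTransfer e.symm
          have hnab : ¬ ∀ a b : S0, a * b = b * a := by
            intro hc
            apply hcomm
            intro a b
            obtain ⟨a0, rfl⟩ := e.surjective a
            obtain ⟨b0, rfl⟩ := e.surjective b
            rw [← map_mul, ← map_mul, hc]
          apply hquo j i0.1 hne' S0 hnab
          constructor
          · refine ⟨e.symm.toMonoidHom.comp (f.comp (QuotientGroup.mk' (N j))), ?_, ?_⟩
            · letI : TopologicalSpace S0 := ⊥
              have hc : Continuous ((fun a : A => e.symm (f a)) ∘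
                  (QuotientGroup.mk' (N j))) :=
                Continuous.comp continuous_of_discreteTopology continuous_quotient_mk'
              exact hc
            · exact e.symm.surjective.comp (hfs.comp (QuotientGroup.mk'_surjective _))
          · refine ⟨e.symm.toMonoidHom.comp ((g.comp
                (MonoidHom.mulSingle (fun i : F => G i.1 ⧸ N i.1) i0)).comp
                (QuotientGroup.mk' (N i0.1))), ?_, ?_⟩
            · letI : TopologicalSpace S0 := ⊥
              have hc : Continuous ((fun a : G i0.1 ⧸ N i0.1 =>
                  e.symm (g (MonoidHom.mulSingle (fun i : F => G i.1 ⧸ N i.1) i0 a))) ∘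
                  (QuotientGroup.mk' (N i0.1))) :=
                Continuous.comp continuous_of_discreteTopology continuous_quotient_mk'
              exact hc
            · exact e.symm.surjective.comp (hi0.comp (QuotientGroup.mk'_surjective _))
  -- now density
  have hdense : Dense (H : Set (∀ i, G i)) := by
    intro x
    rw [mem_closure_iff]
    intro o ho hxo
    obtain ⟨F, u, hu, hsub⟩ := isOpen_pi_iff.mp ho x hxo
    have hch : ∀ i, ∃ Ni : Subgroup (G i), Ni.Normal ∧ IsOpen (Ni : Set (G i)) ∧
        (i ∈ F → ∀ n ∈ Ni, x i * n ∈ u i) := by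
      intro i
      by_cases hi : i ∈ F
      · have hopen : IsOpen ((fun gg => x i * gg) ⁻¹' u i) :=
          (hu i hi).1.preimage (continuous_mul_left (x i))
        have h1 : (1 : G i) ∈ (fun gg => x i * gg) ⁻¹' u i := by
          simp only [Set.mem_preimage, mul_one]
          exact (hu i hi).2
        obtain ⟨V, hV, h1V, hVsub⟩ := compact_exists_isClopen_in_isOpen hopen h1
        obtain ⟨W, hW⟩ :=
          IsTopologicalGroup.exist_openNormalSubgroup_sub_clopen_nhds_of_one hV h1V
        exact ⟨W.toSubgroup, W.isNormal', W.toOpenSubgroup.isOpen,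
          fun _ n hn => hVsub (hW hn)⟩
      · exact ⟨⊤, inferInstance, isOpen_univ, fun h => absurd h hi⟩
    choose N hNn hNo hNu using hch
    obtain ⟨h, hh, hhF⟩ := key F N hNn hNo x
    refine ⟨h, ?_, hh⟩
    apply hsub
    intro i hi
    have h1 := hhF i hi
    have h2 : (x i)⁻¹ * h i ∈ N i := QuotientGroup.eq.mp h1.symm
    have h3 := hNu i hi _ h2
    simpa using h3
  have hcoe : (H : Set (∀ i, G i)) = Set.univ := by
    rw [← hclosed.closure_eq]
    exact hdense.closure_eq
  exact Subgroup.coe_eq_univ.mp hcoe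
end

section
/- Let U be a closed subgroup of GL₂(ℤ₂) with U ⊆ V₁(2). Suppose U surjects onto V₁(2)/V₃(2); that is, for every A ∈ V₁(2) there exists u ∈ U such that u and A have the same reduction mod 8. Then U = V₁(2). -/
open Matrix

/-- The reduction-mod-`p^k` homomorphism `GL₂(ℤ_p) →* GL₂(ℤ/p^kℤ)`. -/
noncomputable def glReductionPow (p : ℕ) [Fact p.Prime] (k : ℕ) :
    GL (Fin 2) ℤ_[p] →* GL (Fin 2) (ZMod (p ^ k)) :=
  Matrix.GeneralLinearGroup.map (PadicInt.toZModPow k)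

/-- `V_k(p)`, the kernel of reduction mod `p^k`, as a subgroup of `GL₂(ℤ_p)`. -/
noncomputable def Vsub (p : ℕ) [Fact p.Prime] (k : ℕ) : Subgroup (GL (Fin 2) ℤ_[p]) :=
  (glReductionPow p k).ker

namespace Stmt1Aux

abbrev M := Matrix (Fin 2) (Fin 2) ℤ_[2]

/-- all entries divisible by `2^k` -/
def cg (k : ℕ) (X : M) : Prop := ∀ i j, (2:ℤ_[2])^k ∣ X i j

lemma cg_zero (X : M) : cg 0 X := fun i j => by simp

lemma cg.mono {a b : ℕ} (h : a ≤ b) {X : M} (hX : cg b X) : cg a X :=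
  fun i j => (pow_dvd_pow _ h).trans (hX i j)

lemma cg.add {k : ℕ} {X Y : M} (hX : cg k X) (hY : cg k Y) : cg k (X + Y) :=
  fun i j => by rw [Matrix.add_apply]; exact dvd_add (hX i j) (hY i j)

lemma cg.neg {k : ℕ} {X : M} (hX : cg k X) : cg k (-X) :=
  fun i j => by rw [Matrix.neg_apply]; exact dvd_neg.2 (hX i j)

lemma cg.sub {k : ℕ} {X Y : M} (hX : cg k X) (hY : cg k Y) : cg k (X - Y) := by
  rw [sub_eq_add_neg]; exact hX.add hY.neg

lemma cg.mul {a b : ℕ} {X Y : M} (hX : cg a X) (hY : cg b Y) : cg (a + b) (X * Y) := by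
  intro i j
  rw [Matrix.mul_apply, pow_add]
  exact Finset.dvd_sum fun l _ => mul_dvd_mul (hX i l) (hY l j)

lemma cg.mul_left {k : ℕ} (Z : M) {X : M} (h : cg k X) : cg k (Z * X) := by
  have := (cg_zero Z).mul h; rwa [zero_add] at this

lemma cg.mul_right {k : ℕ} (Z : M) {X : M} (h : cg k X) : cg k (X * Z) := by
  have := h.mul (cg_zero Z); rwa [add_zero] at this

lemma cg_pow_smul {n k : ℕ} (h : k ≤ n) (X : M) : cg k ((2:ℤ_[2])^n • X) :=
  fun i j => by
    rw [Matrix.smul_apply, smul_eq_mul]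
    exact Dvd.dvd.trans (pow_dvd_pow _ h) (dvd_mul_right _ _)

lemma two_dvd_iff (x : ℤ_[2]) (k : ℕ) :
    PadicInt.toZModPow (p := 2) k x = 0 ↔ (2:ℤ_[2])^k ∣ x := by
  rw [← RingHom.mem_ker, PadicInt.ker_toZModPow, Ideal.mem_span_singleton]
  norm_num

lemma memV (k : ℕ) (A : GL (Fin 2) ℤ_[2]) :
    A ∈ Vsub 2 k ↔ cg k ((A : M) - 1) := by
  have h1 : A ∈ Vsub 2 k ↔ ((PadicInt.toZModPow (p := 2) k).mapMatrix : M →+* _) (A : M) = 1 := by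
    rw [Vsub, MonoidHom.mem_ker, glReductionPow]
    constructor
    · intro h; exact congrArg Units.val h
    · intro h; exact Units.ext h
  rw [h1, ← sub_eq_zero, ← map_one ((PadicInt.toZModPow (p := 2) k).mapMatrix : M →+* _),
    ← map_sub]
  constructor
  · intro h i j
    rw [← two_dvd_iff]
    have := congrFun (congrFun h i) j
    simpa [RingHom.mapMatrix_apply, Matrix.map_apply] using this
  · intro h
    ext i j
    have := (two_dvd_iff _ k).2 (h i j)
    simpa [RingHom.mapMatrix_apply, Matrix.map_apply] using this

lemma isUnit_one_add {X : M} (hX : cg 1 X) : IsUnit (1 + X) := by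
  have h2 : ∀ i j, (2:ℤ_[2]) ∣ X i j := fun i j => by simpa using hX i j
  have hdvd : (2:ℤ_[2]) ∣ Matrix.det (1 + X) - 1 := by
    rw [Matrix.det_fin_two]
    have e : ∀ i j : Fin 2, (1 + X) i j = (if i = j then 1 else 0) + X i j := by
      intro i j; simp [Matrix.add_apply, Matrix.one_apply]
    rw [e, e, e, e]
    norm_num
    have : (1 + X 0 0) * (1 + X 1 1) - X 0 1 * X 1 0 - 1
        = X 0 0 + X 1 1 + X 0 0 * X 1 1 - X 0 1 * X 1 0 := by ring
    rw [this]
    exact dvd_sub (dvd_add (dvd_add (h2 0 0) (h2 1 1)) ((h2 0 0).mul_right _))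
      ((h2 0 1).mul_right _)
  rw [Matrix.isUnit_iff_isUnit_det]
  by_contra h
  rw [PadicInt.not_isUnit_iff, PadicInt.norm_lt_one_iff_dvd] at h
  have h' : (2:ℤ_[2]) ∣ Matrix.det (1 + X) := by exact_mod_cast h
  have h1 : (2:ℤ_[2]) ∣ 1 := by
    have := h'.sub hdvd
    simpa using this
  obtain ⟨c, hc⟩ := h1
  have := congrArg (PadicInt.toZMod (p := 2)) hc
  rw [_root_.map_one, _root_.map_mul] at this
  have h2z : (PadicInt.toZMod (p := 2)) 2 = 0 := by
    have : ((2:ℕ) : ℤ_[2]) = (2 : ℤ_[2]) := by norm_num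
    rw [← this, map_natCast]
    decide
  rw [h2z, zero_mul] at this
  exact one_ne_zero this

lemma cg_of_unit_mul {k : ℕ} (v : GL (Fin 2) ℤ_[2]) {X : M}
    (h : cg k ((v : M) * X)) : cg k X := by
  have h2 := cg.mul_left ((v⁻¹ : GL (Fin 2) ℤ_[2]) : M) h
  rwa [← mul_assoc, show ((v⁻¹ : GL (Fin 2) ℤ_[2]) : M) * (v : M) = 1 by
    rw [← Units.val_mul, inv_mul_cancel, Units.val_one], one_mul] at h2

lemma conj_lemma {k : ℕ} (hk : 1 ≤ k) (v e : GL (Fin 2) ℤ_[2])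
    (hv : cg 1 ((v : M) - 1)) (he : cg k ((e : M) - 1)) :
    cg (k + 1) (((v⁻¹ * e * v * e : GL (Fin 2) ℤ_[2]) : M) - 1) := by
  set Y : M := (e : M) - 1 with hY
  set Z : M := (v : M) - 1 with hZ
  apply cg_of_unit_mul v
  have hval : (v : M) * (((v⁻¹ * e * v * e : GL (Fin 2) ℤ_[2]) : M) - 1)
      = (e : M) * (v : M) * (e : M) - (v : M) := by
    rw [mul_sub, mul_one]
    congr 1
    rw [show ((v⁻¹ * e * v * e : GL (Fin 2) ℤ_[2]) : M)
        = ((v⁻¹ : GL (Fin 2) ℤ_[2]) : M) * (e : M) * (v : M) * (e : M) by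
      simp [Units.val_mul]]
    rw [show (v : M) * (((v⁻¹ : GL (Fin 2) ℤ_[2]) : M) * (e : M) * (v : M) * (e : M))
        = ((v : M) * ((v⁻¹ : GL (Fin 2) ℤ_[2]) : M)) * ((e : M) * (v : M) * (e : M)) by
      simp only [mul_assoc]]
    rw [show (v : M) * ((v⁻¹ : GL (Fin 2) ℤ_[2]) : M) = 1 by
      rw [← Units.val_mul, mul_inv_cancel, Units.val_one], one_mul]
  rw [hval]
  have hE : (e : M) = 1 + Y := by rw [hY]; abel
  have hP : (v : M) = 1 + Z := by rw [hZ]; abel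
  rw [hE, hP]
  have expand : (1 + Y) * (1 + Z) * (1 + Y) - (1 + Z)
      = (Y + Y) + Y * Y + Z * Y + Y * Z + Y * Z * Y := by noncomm_ring
  rw [expand]
  have hYY : cg (k+1) (Y + Y) := by
    intro i j
    rw [Matrix.add_apply, ← two_mul, pow_succ, mul_comm ((2:ℤ_[2])^k) 2]
    exact mul_dvd_mul_left 2 (he i j)
  have h1 : cg (k+1) (Y * Y) := (he.mul he).mono (by omega)
  have h2 : cg (k+1) (Z * Y) := by
    have := hv.mul he; rwa [add_comm] at this
  have h3 : cg (k+1) (Y * Z) := he.mul hv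
  have h4 : cg (k+1) (Y * Z * Y) := ((he.mul hv).mul he).mono (by omega)
  exact (((hYY.add h1).add h2).add h3).add h4

lemma norm_le_of_cg_entry {k : ℕ} {x : ℤ_[2]} (h : (2:ℤ_[2])^k ∣ x) :
    ‖x‖ ≤ ((2:ℝ)⁻¹)^k := by
  have hmem : x ∈ (Ideal.span {((2:ℕ) : ℤ_[2]) ^ k} : Ideal ℤ_[2]) := by
    rw [Ideal.mem_span_singleton]
    exact_mod_cast h
  have := (PadicInt.norm_le_pow_iff_mem_span_pow x k).2 hmem
  calc ‖x‖ ≤ ((2:ℕ) : ℝ) ^ (-(k:ℤ)) := this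
    _ = ((2:ℝ)⁻¹)^k := by
      rw [_root_.zpow_neg, zpow_natCast, inv_pow]; norm_num

lemma tendsto_of_cg (f : ℕ → M) (L : M) (h : ∀ k, cg (k+3) (f k - L)) :
    Filter.Tendsto f Filter.atTop (nhds L) := by
  apply tendsto_pi_nhds.2
  intro i
  apply tendsto_pi_nhds.2
  intro j
  rw [tendsto_iff_norm_sub_tendsto_zero]
  apply squeeze_zero (fun k => norm_nonneg _) (g := fun k => ((2:ℝ)⁻¹)^(k+3))
  · intro k
    have := norm_le_of_cg_entry (h k i j)
    simpa [Matrix.sub_apply] using this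
  · exact (tendsto_pow_atTop_nhds_zero_of_lt_one (by norm_num) (by norm_num)).comp
      (Filter.tendsto_add_atTop_nat 3)

end Stmt1Aux

open Stmt1Aux in
/-- A closed subgroup of `V₁(2)` surjecting onto `V₁(2)/V₃(2)` equals `V₁(2)`. -/
theorem stmt1 (U : Subgroup (GL (Fin 2) ℤ_[2]))
    (hclosed : IsClosed (U : Set (GL (Fin 2) ℤ_[2])))
    (hsub : U ≤ Vsub 2 1)
    (hsurj : ∀ A ∈ Vsub 2 1, ∃ u ∈ U, glReductionPow 2 3 u = glReductionPow 2 3 A) :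
    U = Vsub 2 1 := by
  have key : ∀ j : ℕ, ∀ B ∈ Vsub 2 1, ∃ u ∈ U, u⁻¹ * B ∈ Vsub 2 (j + 3) := by
    intro j
    induction j with
    | zero =>
      intro B hB
      obtain ⟨u, huU, heq⟩ := hsurj B hB
      refine ⟨u, huU, ?_⟩
      show u⁻¹ * B ∈ (glReductionPow 2 3).ker
      rw [MonoidHom.mem_ker, MonoidHom.map_mul, MonoidHom.map_inv, heq, inv_mul_cancel]
    | succ j IH =>
      intro B hB
      obtain ⟨u, huU, hD⟩ := IH B hB
      set D := u⁻¹ * B with hDdef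
      have hDk : cg (j+3) ((D : M) - 1) := (memV _ _).1 hD
      set C : M := fun i j' => (hDk i j').choose with hCdef
      have hCspec : ∀ i j', ((D : M) - 1) i j' = (2:ℤ_[2])^(j+3) * C i j' :=
        fun i j' => (hDk i j').choose_spec
      have hDval : (D : M) = 1 + (2:ℤ_[2])^(j+3) • C := by
        have hh : (D : M) - 1 = (2:ℤ_[2])^(j+3) • C := by
          ext i j'
          rw [Matrix.smul_apply, smul_eq_mul]
          exact hCspec i j'
        rw [← hh]; abel
      set sX : M := (2:ℤ_[2])^(j+2) • C with hsXdef
      have hsX1 : cg 1 sX := cg_pow_smul (by omega) C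
      have hs_unit : IsUnit ((1:M) + sX) := isUnit_one_add hsX1
      set s : GL (Fin 2) ℤ_[2] := hs_unit.unit with hsdef
      have hs_val : (s : M) = 1 + sX := hs_unit.unit_spec
      have hs_mem : s ∈ Vsub 2 1 := by
        rw [memV, hs_val]
        have : (1:M) + sX - 1 = sX := by abel
        rw [this]; exact hsX1
      obtain ⟨v, hvU, hE⟩ := IH s hs_mem
      have hEk : cg (j+3) (((v⁻¹ * s : GL (Fin 2) ℤ_[2]) : M) - 1) := (memV _ _).1 hE
      have hv1 : cg 1 ((v : M) - 1) := (memV 1 v).1 (hsub hvU)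
      have hT : cg (j+4)
          (((v⁻¹ * (v⁻¹ * s) * v * (v⁻¹ * s) : GL (Fin 2) ℤ_[2]) : M) - 1) :=
        conj_lemma (by omega) v (v⁻¹ * s) hv1 hEk
      refine ⟨u * v * v, mul_mem (mul_mem huU hvU) hvU, ?_⟩
      have hjj : j + 1 + 3 = j + 4 := by omega
      rw [hjj, memV]
      have hgrp : (u * v * v)⁻¹ * B = (v⁻¹ * v⁻¹) * D := by
        rw [hDdef]; group
      have hgrp2 : (v⁻¹ * (v⁻¹ * s) * v * (v⁻¹ * s) : GL (Fin 2) ℤ_[2])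
          = (v⁻¹ * v⁻¹) * (s * s) := by group
      have hmain : (((u * v * v)⁻¹ * B : GL (Fin 2) ℤ_[2]) : M) - 1
          = ((((v⁻¹ * v⁻¹) * (s * s) : GL (Fin 2) ℤ_[2]) : M) - 1)
            + (((v⁻¹ * v⁻¹ : GL (Fin 2) ℤ_[2]) : M) * ((D : M) - (s : M) * (s : M))) := by
        rw [hgrp]
        have e1 : (((v⁻¹ * v⁻¹) * D : GL (Fin 2) ℤ_[2]) : M)
            = ((v⁻¹ * v⁻¹ : GL (Fin 2) ℤ_[2]) : M) * (D : M) := Units.val_mul _ _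
        have e2 : (((v⁻¹ * v⁻¹) * (s * s) : GL (Fin 2) ℤ_[2]) : M)
            = ((v⁻¹ * v⁻¹ : GL (Fin 2) ℤ_[2]) : M) * ((s : M) * (s : M)) := by
          simp [Units.val_mul]
        rw [e1, e2, mul_sub]
        abel
      rw [hmain, ← hgrp2]
      apply cg.add hT
      apply cg.mul_left
      have hs2 : (s : M) * (s : M) = 1 + (sX + sX) + sX * sX := by
        rw [hs_val]; noncomm_ring
      have hD2 : (D : M) = 1 + (sX + sX) := by
        rw [hDval, hsXdef, ← add_smul]
        congr 2
        ring
      have hfin : (D : M) - (s : M) * (s : M) = -(sX * sX) := by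
        rw [hs2, hD2]; abel
      rw [hfin]
      apply cg.neg
      have := (cg_pow_smul (le_refl (j+2)) C).mul (cg_pow_smul (le_refl (j+2)) C)
      exact (this.mono (by omega))
  refine le_antisymm hsub ?_
  intro A hA
  choose u huU hmem using fun k => key k A hA
  have huval : ∀ k, cg (k+3) ((u k : M) - (A : M)) := by
    intro k
    have hinv : A⁻¹ * u k ∈ Vsub 2 (k+3) := by
      have := (Vsub 2 (k+3)).inv_mem (hmem k)
      rwa [_root_.mul_inv_rev, inv_inv] at this
    have hc := (memV _ _).1 hinv
    have heq : (u k : M) - (A : M) = (A : M) * (((A⁻¹ * u k : GL (Fin 2) ℤ_[2]) : M) - 1) := by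
      rw [mul_sub, mul_one, ← Units.val_mul, show A * (A⁻¹ * u k) = u k by group]
    rw [heq]
    exact cg.mul_left _ hc
  have huinv : ∀ k, cg (k+3) (((u k)⁻¹ : GL (Fin 2) ℤ_[2]) - ((A⁻¹ : GL (Fin 2) ℤ_[2]) : M)) := by
    intro k
    have hc := (memV _ _).1 (hmem k)
    have heq : (((u k)⁻¹ : GL (Fin 2) ℤ_[2]) : M) - ((A⁻¹ : GL (Fin 2) ℤ_[2]) : M)
        = ((((u k)⁻¹ * A : GL (Fin 2) ℤ_[2]) : M) - 1) * ((A⁻¹ : GL (Fin 2) ℤ_[2]) : M) := by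
      rw [sub_mul, one_mul, ← Units.val_mul, show ((u k)⁻¹ * A) * A⁻¹ = (u k)⁻¹ by group]
    rw [heq]
    exact cg.mul_right _ hc
  have htend : Filter.Tendsto u Filter.atTop (nhds A) := by
    rw [Units.isInducing_embedProduct.tendsto_nhds_iff]
    simp only [Function.comp_def, Units.embedProduct_apply]
    apply Filter.Tendsto.prodMk_nhds
    · exact tendsto_of_cg _ _ huval
    · exact (MulOpposite.continuous_op.tendsto _).comp (tendsto_of_cg _ _ huinv)
  exact hclosed.mem_of_tendsto htend (Filter.Eventually.of_forall fun k => huU k)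
end

section
/- Let ℓ be an odd prime and let U be a closed subgroup of GL₂(ℤ_ℓ) with U ⊆ V₁(ℓ). Suppose U surjects onto V₁(ℓ)/V₂(ℓ); that is, for every A ∈ V₁(ℓ) there exists u ∈ U such that u and A have the same reduction mod ℓ². Then U = V₁(ℓ). -/
open Matrix Finset Filter

namespace StmtAux

variable {p : ℕ} [Fact p.Prime]

abbrev Mat (p : ℕ) [Fact p.Prime] := Matrix (Fin 2) (Fin 2) ℤ_[p]

lemma coe_glRed (k : ℕ) (A : GL (Fin 2) ℤ_[p]) :
    ((glReductionPow p k A : GL (Fin 2) (ZMod (p^k))) : Matrix (Fin 2) (Fin 2) (ZMod (p^k)))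
      = (A : Mat p).map (PadicInt.toZModPow k) := rfl

lemma mem_Vsub_iff {k : ℕ} (A : GL (Fin 2) ℤ_[p]) :
    A ∈ Vsub p k ↔ ∃ B : Mat p, (A : Mat p) = 1 + (p : ℤ_[p])^k • B := by
  constructor
  · intro hA
    rw [Vsub, MonoidHom.mem_ker] at hA
    have h1 : (A : Mat p).map (PadicInt.toZModPow k) = 1 := by
      rw [← coe_glRed, hA]; rfl
    have h2 : ∀ i j, (A : Mat p) i j - (1 : Mat p) i j ∈ Ideal.span {(p : ℤ_[p])^k} := by
      intro i j
      rw [← PadicInt.ker_toZModPow, RingHom.mem_ker, map_sub, sub_eq_zero]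
      have h3 : (A : Mat p).map (PadicInt.toZModPow k)
          = (1 : Mat p).map (PadicInt.toZModPow k) := by
        rw [h1]
        ext i j
        by_cases h : i = j <;> simp [Matrix.one_apply, h]
      have := congrFun (congrFun h3 i) j
      simpa [Matrix.map_apply] using this
    have h4 : ∀ i j, ∃ b, b * (p : ℤ_[p])^k = (A : Mat p) i j - (1 : Mat p) i j :=
      fun i j => Ideal.mem_span_singleton'.mp (h2 i j)
    refine ⟨fun i j => (h4 i j).choose, ?_⟩
    ext i j
    have := (h4 i j).choose_spec
    simp only [Matrix.add_apply, Matrix.smul_apply, smul_eq_mul]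
    erw [Matrix.smul_apply, smul_eq_mul]
    linear_combination -this
  · rintro ⟨B, hB⟩
    rw [Vsub, MonoidHom.mem_ker]
    ext i j
    have : ((glReductionPow p k A : GL (Fin 2) (ZMod (p^k))) : Matrix (Fin 2) (Fin 2) (ZMod (p^k))) i j
        = (1 : Matrix (Fin 2) (Fin 2) (ZMod (p^k))) i j := by
      rw [coe_glRed, hB]
      simp only [Matrix.map_apply, Matrix.add_apply, Matrix.smul_apply, smul_eq_mul, map_add,
        _root_.map_mul, map_pow, map_natCast]
      have : ((p : ZMod (p^k)))^k = 0 := by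
        rw [← Nat.cast_pow, ZMod.natCast_self]
      rw [this, zero_mul, add_zero]
      by_cases h : i = j <;> simp [Matrix.one_apply, h]
    exact this

lemma inv_mul_mem {m : ℕ} {x y : GL (Fin 2) ℤ_[p]} {Z : Mat p}
    (h : (x : Mat p) = (y : Mat p) + (p : ℤ_[p])^m • Z) :
    y⁻¹ * x ∈ Vsub p m := by
  refine (mem_Vsub_iff _).mpr ⟨(y⁻¹ : GL (Fin 2) ℤ_[p]) * Z, ?_⟩
  have hcoe : ((y⁻¹ * x : GL (Fin 2) ℤ_[p]) : Mat p)
      = (y⁻¹ : GL (Fin 2) ℤ_[p]) * (x : Mat p) := Units.val_mul _ _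
  rw [hcoe, h, mul_add, mul_smul_comm]
  congr 1
  exact y.inv_mul

lemma isUnit_one_add (k : ℕ) (B : Mat p) :
    IsUnit ((1 : Mat p) + (p : ℤ_[p])^(k+1) • B) := by
  rw [Matrix.isUnit_iff_isUnit_det]
  set M := (1 : Mat p) + (p : ℤ_[p])^(k+1) • B with hM
  have hdet : M.det = 1 + (p:ℤ_[p]) * ((p:ℤ_[p])^k * (B 0 0 + B 1 1)
      + (p:ℤ_[p])^(2*k+1) * (B 0 0 * B 1 1 - B 0 1 * B 1 0)) := by
    rw [Matrix.det_fin_two]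
    simp only [hM, Matrix.add_apply, Matrix.smul_apply, smul_eq_mul, Matrix.one_apply_eq,
      Matrix.one_apply_ne (by decide : (0:Fin 2) ≠ 1),
      Matrix.one_apply_ne (by decide : (1:Fin 2) ≠ 0)]
    ring
  rw [PadicInt.isUnit_iff, hdet]
  set c := (p:ℤ_[p])^k * (B 0 0 + B 1 1)
      + (p:ℤ_[p])^(2*k+1) * (B 0 0 * B 1 1 - B 0 1 * B 1 0) with hc
  have ht : ‖(p:ℤ_[p]) * c‖ < 1 := by
    rw [norm_mul]
    calc ‖(p:ℤ_[p])‖ * ‖c‖ ≤ ‖(p:ℤ_[p])‖ * 1 :=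
          mul_le_mul_of_nonneg_left (PadicInt.norm_le_one c) (norm_nonneg _)
      _ = (p:ℝ)⁻¹ := by rw [mul_one, PadicInt.norm_p]
      _ < 1 := by
          rw [inv_lt_one_iff₀]
          right
          exact_mod_cast (Fact.out : p.Prime).one_lt
  rw [PadicInt.norm_add_eq_max_of_ne (by rw [norm_one]; exact (ne_of_lt ht).symm), norm_one]
  exact max_eq_left ht.le

lemma natdvd {p k j : ℕ} (hp : p.Prime) (hp3 : 3 ≤ p) (hk : 1 ≤ k) (hj : 2 ≤ j) :
    p^(k+2) ∣ p.choose j * p^(k*j) := by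
  rcases lt_trichotomy j p with h | h | h
  · obtain ⟨t, ht⟩ := hp.dvd_choose_self (by omega) h
    obtain ⟨s, hs⟩ : ∃ s, k*j = (k+1) + s := by
      have h2 : k*2 ≤ k*j := Nat.mul_le_mul_left k hj
      exact ⟨k*j - (k+1), by omega⟩
    rw [ht, hs, pow_add]
    exact ⟨t * p^s, by ring⟩
  · subst h
    rw [Nat.choose_self, one_mul]
    refine pow_dvd_pow _ ?_
    have : k*3 ≤ k*j := Nat.mul_le_mul_left k hp3
    omega
  · rw [Nat.choose_eq_zero_of_lt h, zero_mul]; exact dvd_zero _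

lemma pow_expand (hp3 : 3 ≤ p) {k : ℕ} (hk : 1 ≤ k) (B : Mat p) :
    ∃ C : Mat p, ((1 : Mat p) + (p:ℤ_[p])^k • B)^p
      = 1 + (p:ℤ_[p])^(k+1) • B + (p:ℤ_[p])^(k+2) • C := by
  set y : Mat p := (p:ℤ_[p])^k • B with hy
  have hexp := (Commute.one_right y).add_pow p
  have hterm : ∀ i : ℕ, ∃ Z : Mat p,
      y^(i+2) * 1^(p-(i+2)) * (p.choose (i+2) : Mat p) = (p:ℤ_[p])^(k+2) • Z := by
    intro i
    obtain ⟨d, hd⟩ := natdvd (Fact.out : p.Prime) hp3 hk (by omega : 2 ≤ i + 2)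
    refine ⟨(d : ℤ_[p]) • B^(i+2), ?_⟩
    rw [one_pow, mul_one, hy, smul_pow]
    have swap : ((p:ℤ_[p])^k)^(i+2) • B^(i+2) * (p.choose (i+2) : Mat p)
        = (p.choose (i+2) : ℤ_[p]) • (((p:ℤ_[p])^k)^(i+2) • B^(i+2)) := by
      rw [(Nat.cast_commute (p.choose (i+2)) (((p:ℤ_[p])^k)^(i+2) • B^(i+2))).eq.symm,
        ← nsmul_eq_mul, ← Nat.cast_smul_eq_nsmul ℤ_[p]]
    rw [swap, smul_smul, smul_smul, ← pow_mul]
    congr 1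
    have hc := congrArg (Nat.cast : ℕ → ℤ_[p]) hd
    push_cast at hc
    linear_combination hc
  choose Z hZ using hterm
  obtain ⟨m, hm⟩ : ∃ m, p = m + 3 := ⟨p - 3, by omega⟩
  refine ⟨∑ i ∈ range (m+2), Z i, ?_⟩
  rw [show (1 : Mat p) + y = y + 1 from add_comm _ _, hexp,
    show p + 1 = (m+2)+1+1 from by omega,
    Finset.sum_range_succ' (fun x => y^x * 1^(p-x) * (p.choose x : Mat p)) ((m+2)+1),
    Finset.sum_range_succ' (fun x => y^(x+1) * 1^(p-(x+1)) * (p.choose (x+1) : Mat p)) (m+2)]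
  have hsum : ∑ i ∈ range (m+2), y^(i+1+1) * 1^(p-(i+1+1)) * (p.choose (i+1+1) : Mat p)
      = (p:ℤ_[p])^(k+2) • ∑ i ∈ range (m+2), Z i := by
    rw [Finset.smul_sum]
    exact Finset.sum_congr rfl fun i _ => hZ i
  have e0 : y^0 * 1^(p-0) * (p.choose 0 : Mat p) = 1 := by simp
  have e1 : y^(0+1) * 1^(p-(0+1)) * (p.choose (0+1) : Mat p) = (p:ℤ_[p])^(k+1) • B := by
    rw [Nat.choose_one_right, pow_one, one_pow, mul_one,
      (Nat.cast_commute p y).eq.symm, ← nsmul_eq_mul, ← Nat.cast_smul_eq_nsmul ℤ_[p],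
      hy, smul_smul, ← pow_succ']
  rw [hsum, e0, e1]
  abel

lemma key (hp3 : 3 ≤ p) (U : Subgroup (GL (Fin 2) ℤ_[p]))
    (hbase : ∀ A ∈ Vsub p 1, ∃ u ∈ U, u⁻¹ * A ∈ Vsub p 2) :
    ∀ k, 1 ≤ k → ∀ A ∈ Vsub p k, ∃ u ∈ U, u⁻¹ * A ∈ Vsub p (k+1) := by
  intro k
  induction k with
  | zero => omega
  | succ k ih =>
    intro _ A hA
    rcases Nat.eq_zero_or_pos k with rfl | hk
    · exact hbase A hA
    · obtain ⟨k', rfl⟩ : ∃ k', k = k' + 1 := ⟨k-1, by omega⟩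
      obtain ⟨B, hB⟩ := (mem_Vsub_iff A).mp hA
      have hu : IsUnit ((1 : Mat p) + (p:ℤ_[p])^(k'+1) • B) := isUnit_one_add _ _
      set h : GL (Fin 2) ℤ_[p] := hu.unit with hdef
      have hval : (h : Mat p) = 1 + (p:ℤ_[p])^(k'+1) • B := hu.unit_spec
      have hmem : h ∈ Vsub p (k'+1) := (mem_Vsub_iff h).mpr ⟨B, hval⟩
      obtain ⟨v, hvU, hv⟩ := ih (by omega) h hmem
      have hw : (v⁻¹ * h)⁻¹ ∈ Vsub p (k'+1+1) := inv_mem hv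
      obtain ⟨E, hE⟩ := (mem_Vsub_iff _).mp hw
      set D : Mat p := E + (p:ℤ_[p])^(k'+1) • (B * E) with hD
      have hveq : (v : Mat p) = 1 + (p:ℤ_[p])^(k'+1) • (B + (p:ℤ_[p]) • D) := by
        have h1 : (v : Mat p) = (h : Mat p) * (((v⁻¹ * h)⁻¹ : GL (Fin 2) ℤ_[p]) : Mat p) := by
          rw [← Units.val_mul]
          congr 1
          group
        rw [h1, hE, hval, hD]
        simp only [mul_add, add_mul, one_mul, mul_one, smul_mul_assoc, mul_smul_comm,
          smul_add, smul_smul]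
        module
      obtain ⟨C, hC⟩ := pow_expand hp3 (by omega : 1 ≤ k'+1) (B + (p:ℤ_[p]) • D)
      refine ⟨v^p, pow_mem hvU p, inv_mul_mem (x := A) (y := v^p)
        (Z := -(D + C)) ?_⟩
      have hvp : ((v^p : GL (Fin 2) ℤ_[p]) : Mat p)
          = 1 + (p:ℤ_[p])^(k'+1+1) • (B + (p:ℤ_[p]) • D) + (p:ℤ_[p])^(k'+1+2) • C := by
        rw [Units.val_pow_eq_pow_val, hveq, hC]
      rw [hB, hvp]
      module

lemma chain (U : Subgroup (GL (Fin 2) ℤ_[p]))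
    (hkey : ∀ k, 1 ≤ k → ∀ A ∈ Vsub p k, ∃ u ∈ U, u⁻¹ * A ∈ Vsub p (k+1)) :
    ∀ A ∈ Vsub p 1, ∀ k, ∃ u ∈ U, u⁻¹ * A ∈ Vsub p (k+1) := by
  intro A hA k
  induction k with
  | zero => exact ⟨1, one_mem _, by simpa using hA⟩
  | succ k ih =>
    obtain ⟨u, huU, hu⟩ := ih
    obtain ⟨v, hvU, hv⟩ := hkey (k+1) (by omega) _ hu
    exact ⟨u * v, mul_mem huU hvU, by rw [_root_.mul_inv_rev, mul_assoc]; exact hv⟩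

lemma tendsto_val (g : ℕ → GL (Fin 2) ℤ_[p]) (hg : ∀ k, g k ∈ Vsub p (k+1)) :
    Tendsto (fun k => ((g k : Mat p))) atTop (nhds (1 : Mat p)) := by
  choose B hB using fun k => (mem_Vsub_iff (g k)).mp (hg k)
  have : ∀ i j, Tendsto (fun k => ((g k : Mat p)) i j) atTop (nhds ((1 : Mat p) i j)) := by
    intro i j
    rw [tendsto_iff_dist_tendsto_zero]
    refine squeeze_zero (g := fun k => ((p:ℝ)⁻¹)^(k+1)) (fun k => dist_nonneg) ?_ ?_
    · intro k
      rw [hB k]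
      simp only [Matrix.add_apply, Matrix.smul_apply, smul_eq_mul]
      rw [dist_eq_norm]
      have he : (1:Mat p) i j + (p:ℤ_[p])^(k+1) * B k i j - (1:Mat p) i j
          = (p:ℤ_[p])^(k+1) * B k i j := by ring
      rw [he, norm_mul]
      calc ‖(p:ℤ_[p])^(k+1)‖ * ‖B k i j‖ ≤ ‖(p:ℤ_[p])^(k+1)‖ * 1 :=
            mul_le_mul_of_nonneg_left (PadicInt.norm_le_one _) (norm_nonneg _)
        _ = ((p:ℝ)⁻¹)^(k+1) := by rw [mul_one, norm_pow, PadicInt.norm_p]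
    · have h1 : (p:ℝ)⁻¹ < 1 := by
        rw [inv_lt_one_iff₀]
        right
        exact_mod_cast (Fact.out : p.Prime).one_lt
      have h0 : (0:ℝ) ≤ (p:ℝ)⁻¹ := by positivity
      have := tendsto_pow_atTop_nhds_zero_of_lt_one h0 h1
      exact (this.comp (tendsto_add_atTop_nat 1))
  exact tendsto_pi_nhds.mpr fun i => tendsto_pi_nhds.mpr fun j => this i j

end StmtAux

/-- For an odd prime `ℓ`, a closed subgroup of `V₁(ℓ)` surjecting onto `V₁(ℓ)/V₂(ℓ)`
equals `V₁(ℓ)`. -/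
theorem stmt2 (p : ℕ) [Fact p.Prime] (hodd : Odd p)
    (U : Subgroup (GL (Fin 2) ℤ_[p]))
    (hclosed : IsClosed (U : Set (GL (Fin 2) ℤ_[p])))
    (hsub : U ≤ Vsub p 1)
    (hsurj : ∀ A ∈ Vsub p 1, ∃ u ∈ U, glReductionPow p 2 u = glReductionPow p 2 A) :
    U = Vsub p 1 := by
  refine le_antisymm hsub ?_
  intro A hA
  have hbase : ∀ A ∈ Vsub p 1, ∃ u ∈ U, u⁻¹ * A ∈ Vsub p 2 := by
    intro A hA
    obtain ⟨u, huU, hred⟩ := hsurj A hA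
    refine ⟨u, huU, ?_⟩
    have hm : (glReductionPow p 2) (u⁻¹ * A)
        = ((glReductionPow p 2) u)⁻¹ * (glReductionPow p 2) A := by
      rw [MonoidHom.map_mul, MonoidHom.map_inv]
    rw [Vsub, MonoidHom.mem_ker, hm, hred, inv_mul_cancel]
  have hp3 : 3 ≤ p := by
    have h2 := (Fact.out : p.Prime).two_le
    rcases hodd with ⟨m, hm⟩; omega
  have hkey := StmtAux.key hp3 U hbase
  have hchain := StmtAux.chain U hkey A hA
  choose u huU hu using hchain
  set g : ℕ → GL (Fin 2) ℤ_[p] := fun k => (u k)⁻¹ * A with hgdef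
  have hg2 : ∀ k, (g k)⁻¹ ∈ Vsub p (k+1) := fun k => inv_mem (hu k)
  have T1 := StmtAux.tendsto_val g hu
  have T2 : Filter.Tendsto (fun k => (((g k)⁻¹ : GL (Fin 2) ℤ_[p]) : StmtAux.Mat p))
      Filter.atTop (nhds (1 : StmtAux.Mat p)) := StmtAux.tendsto_val (fun k => (g k)⁻¹) hg2
  have Tg : Filter.Tendsto g Filter.atTop (nhds 1) := by
    rw [(Units.isInducing_embedProduct (M := StmtAux.Mat p)).tendsto_nhds_iff]
    have he : nhds ((Units.embedProduct (StmtAux.Mat p)) 1)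
        = nhds ((1 : StmtAux.Mat p), MulOpposite.op (1 : StmtAux.Mat p)) := rfl
    rw [he]
    exact Filter.Tendsto.prodMk_nhds T1 ((MulOpposite.continuous_op.tendsto _).comp T2)
  have TA : Filter.Tendsto u Filter.atTop (nhds A) := by
    have hueq : u = fun k => A * (g k)⁻¹ := by
      funext k
      rw [hgdef]
      group
    rw [hueq]
    have := (Filter.Tendsto.inv Tg).const_mul (b := A)
    simpa using this
  exact hclosed.mem_of_tendsto TA (Filter.Eventually.of_forall huU)
end

section
/- Let ℓ ≥ 5 be a prime and let H be a closed subgroup of GL₂(ℤ_ℓ) all of whose elements have determinant 1 (i.e., a closed subgroup of SL₂(ℤ_ℓ)). Suppose H surjects onto SL₂(𝔽_ℓ) under reduction mod ℓ; that is, for every A ∈ GL₂(ℤ_ℓ) with det A = 1 there exists h ∈ H such that h and A have the same reduction mod ℓ. Then H = SL₂(ℤ_ℓ), i.e., H contains every element of GL₂(ℤ_ℓ) of determinant 1. -/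
open Matrix

section AuxSerre

open Finset

section RingLemmas
variable {R : Type*} [Ring R]

lemma aux_pow_expand (u t : R) (h : ∀ m : R, t * m * t = 0) (k : ℕ) :
    (u + t) ^ k = u ^ k + ∑ i ∈ range k, u ^ i * t * u ^ (k - 1 - i) := by
  induction k with
  | zero => simp
  | succ k ih =>
    rw [pow_succ, ih, add_mul, mul_add, mul_add, pow_succ]
    have hSt : (∑ i ∈ range k, u ^ i * t * u ^ (k - 1 - i)) * t = 0 := by
      rw [sum_mul]
      refine Finset.sum_eq_zero fun i _ => ?_
      rw [mul_assoc (u ^ i), mul_assoc, h, mul_zero]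
    have hSu : (∑ i ∈ range k, u ^ i * t * u ^ (k - 1 - i)) * u
        = ∑ i ∈ range k, u ^ i * t * u ^ (k + 1 - 1 - i) := by
      rw [sum_mul]
      refine Finset.sum_congr rfl fun i hi => ?_
      rw [mul_assoc, ← pow_succ]
      congr 2
      have := mem_range.mp hi
      omega
    rw [hSt, hSu, Finset.sum_range_succ]
    simp only [Nat.add_sub_cancel, Nat.sub_self, pow_zero, mul_one]
    abel

lemma aux_unipotent_pow (e : R) (he : e * e = 0) (i : ℕ) :
    (1 + e) ^ i = 1 + i • e := by
  induction i with
  | zero => simp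
  | succ i ih =>
    rw [pow_succ, ih, add_mul, mul_add, mul_add, one_mul, mul_one, one_mul, smul_mul_assoc, he,
      smul_zero, succ_nsmul]
    abel

end RingLemmas

section NumLemmas

lemma aux_sum_cubic (n : ℕ) :
    6 * ∑ i ∈ range n, (i : ℤ) * ((n : ℤ) - 1 - (i : ℤ)) = n * (n - 1) * (n - 2) := by
  induction n with
  | zero => simp
  | succ n ih =>
    rw [Finset.sum_range_succ]
    have step : ∀ i ∈ range n, (i : ℤ) * ((n + 1 : ℕ) - 1 - (i : ℤ))
        = (i : ℤ) * ((n : ℤ) - 1 - i) + i := by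
      intro i _
      push_cast
      ring
    rw [Finset.sum_congr rfl step, Finset.sum_add_distrib]
    have gauss : (∑ i ∈ range n, (i : ℤ)) * 2 = n * (n - 1) := by
      have := Finset.sum_range_id_mul_two n
      have hcast : ((∑ i ∈ range n, i : ℕ) : ℤ) * 2 = ((n * (n - 1) : ℕ) : ℤ) := by
        exact_mod_cast congrArg (Nat.cast : ℕ → ℤ) this
      rw [Nat.cast_sum] at hcast
      rcases Nat.eq_zero_or_pos n with h | h
      · simp [h]
      · rw [hcast, Nat.cast_mul, Nat.cast_sub h]
        push_cast; ring
    push_cast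
    nlinarith [ih, gauss]

lemma aux_p_dvd_sum_sq {p : ℕ} (hp : p.Prime) (hp5 : 5 ≤ p) :
    p ∣ ∑ i ∈ range p, i * (p - 1 - i) := by
  have key : 6 * ∑ i ∈ range p, (i : ℤ) * ((p : ℤ) - 1 - (i : ℤ)) = p * (p - 1) * (p - 2) :=
    aux_sum_cubic p
  have hcast : ((∑ i ∈ range p, i * (p - 1 - i) : ℕ) : ℤ)
      = ∑ i ∈ range p, (i : ℤ) * ((p : ℤ) - 1 - (i : ℤ)) := by
    rw [Nat.cast_sum]
    refine Finset.sum_congr rfl fun i hi => ?_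
    have hi' := mem_range.mp hi
    have : ((p - 1 - i : ℕ) : ℤ) = (p : ℤ) - 1 - i := by omega
    rw [Nat.cast_mul, this]
  have hdvd6 : (p : ℤ) ∣ 6 * ∑ i ∈ range p, (i : ℤ) * ((p : ℤ) - 1 - (i : ℤ)) := by
    rw [key]; exact ⟨((p : ℤ) - 1) * ((p : ℤ) - 2), by ring⟩
  have hprime : Prime (p : ℤ) := Nat.prime_iff_prime_int.mp hp
  rcases hprime.dvd_mul.mp hdvd6 with h | h
  · exfalso
    have : p ∣ 6 := by exact_mod_cast Int.ofNat_dvd.mp (by exact_mod_cast h)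
    have := Nat.le_of_dvd (by norm_num) this
    interval_cases p
    · omega
    · exact absurd hp (by norm_num)
  · rw [← hcast] at h
    exact_mod_cast h

lemma aux_p_dvd_gauss {p : ℕ} (hodd : p % 2 = 1) :
    p ∣ ∑ i ∈ range p, i := by
  have h2 := Finset.sum_range_id_mul_two p
  refine ⟨(p - 1) / 2, ?_⟩
  have h : 2 * ((p - 1) / 2) = p - 1 := by omega
  have : (∑ i ∈ range p, i) * 2 = (p * ((p - 1) / 2)) * 2 := by
    rw [h2]; rw [mul_assoc, mul_comm ((p-1)/2) 2, h]
  omega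

end NumLemmas

lemma aux_zmod_pow {p : ℕ} [hfp : Fact p.Prime] (hp5 : 5 ≤ p)
    (e b : Matrix (Fin 2) (Fin 2) (ZMod (p ^ 2))) (he : e * e = 0) :
    (1 + e + p • b) ^ p = 1 + p • e := by
  have podd : p % 2 = 1 := Nat.odd_iff.mp (hfp.out.odd_of_ne_two (by omega))
  have hps : ∀ (n : ℕ) (y : Matrix (Fin 2) (Fin 2) (ZMod (p ^ 2))), p ^ 2 ∣ n → n • y = 0 := by
    intro n y hn
    rw [← Nat.cast_smul_eq_nsmul (ZMod (p ^ 2)),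
      (ZMod.natCast_eq_zero_iff n (p ^ 2)).mpr hn, zero_smul]
  have ht : ∀ m, (p • b) * m * (p • b) = 0 := by
    intro m
    rw [smul_mul_assoc, smul_mul_assoc, mul_smul_comm, smul_smul]
    exact hps _ _ ⟨1, by ring⟩
  rw [aux_pow_expand (1 + e) (p • b) ht p, aux_unipotent_pow e he p]
  have hterm : ∀ i ∈ range p, (1 + e) ^ i * (p • b) * (1 + e) ^ (p - 1 - i)
      = p • b + (i * p) • (e * b) + ((p - 1 - i) * p) • (b * e)
        + (i * p * (p - 1 - i)) • (e * b * e) := by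
    intro i _
    rw [aux_unipotent_pow e he i, aux_unipotent_pow e he (p - 1 - i)]
    simp only [mul_add, add_mul, one_mul, mul_one, smul_mul_assoc, mul_smul_comm, smul_smul]
    module
  rw [Finset.sum_congr rfl hterm]
  rw [Finset.sum_add_distrib, Finset.sum_add_distrib, Finset.sum_add_distrib]
  have S0 : ∑ _i ∈ range p, p • b = 0 := by
    rw [Finset.sum_const, card_range, smul_smul]
    exact hps _ _ ⟨1, by ring⟩
  have S1 : ∑ i ∈ range p, (i * p) • (e * b) = 0 := by
    rw [← Finset.sum_smul, ← Finset.sum_mul]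
    obtain ⟨k, hk⟩ := aux_p_dvd_gauss podd
    exact hps _ _ ⟨k, by rw [hk]; ring⟩
  have S2 : ∑ i ∈ range p, ((p - 1 - i) * p) • (b * e) = 0 := by
    rw [← Finset.sum_smul, ← Finset.sum_mul, Finset.sum_range_reflect (fun j => j) p]
    obtain ⟨k, hk⟩ := aux_p_dvd_gauss podd
    exact hps _ _ ⟨k, by rw [hk]; ring⟩
  have S3 : ∑ i ∈ range p, (i * p * (p - 1 - i)) • (e * b * e) = 0 := by
    rw [← Finset.sum_smul]
    have : ∑ i ∈ range p, i * p * (p - 1 - i) = p * ∑ i ∈ range p, i * (p - 1 - i) := by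
      rw [Finset.mul_sum]
      exact Finset.sum_congr rfl fun i _ => by ring
    rw [this]
    obtain ⟨k, hk⟩ := aux_p_dvd_sum_sq hfp.out hp5
    exact hps _ _ ⟨k, by rw [hk]; ring⟩
  rw [S0, S1, S2, S3]
  abel

end AuxSerre
variable {p : ℕ} [Fact p.Prime]

/-- congruence mod p^n entrywise for 2x2 matrices over Z_p -/
def MCong (p : ℕ) [Fact p.Prime] (n : ℕ) (A B : Matrix (Fin 2) (Fin 2) ℤ_[p]) : Prop :=
  ∃ C, A = B + (p : ℤ_[p]) ^ n • C

namespace MCong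

lemma refl (n : ℕ) (A : Matrix (Fin 2) (Fin 2) ℤ_[p]) : MCong p n A A := ⟨0, by simp⟩

lemma symm {n : ℕ} {A B : Matrix (Fin 2) (Fin 2) ℤ_[p]} (h : MCong p n A B) : MCong p n B A := by
  obtain ⟨C, hC⟩ := h; exact ⟨-C, by simp [hC]⟩

lemma trans {n : ℕ} {A B C : Matrix (Fin 2) (Fin 2) ℤ_[p]} (h1 : MCong p n A B)
    (h2 : MCong p n B C) : MCong p n A C := by
  obtain ⟨D, hD⟩ := h1; obtain ⟨E, hE⟩ := h2
  exact ⟨D + E, by simp [hD, hE, smul_add]; abel⟩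

lemma mono {m n : ℕ} (hmn : m ≤ n) {A B : Matrix (Fin 2) (Fin 2) ℤ_[p]} (h : MCong p n A B) :
    MCong p m A B := by
  obtain ⟨C, hC⟩ := h
  refine ⟨(p : ℤ_[p]) ^ (n - m) • C, ?_⟩
  rw [hC, smul_smul, ← pow_add, Nat.add_sub_cancel' hmn]

lemma mul_left {n : ℕ} (M : Matrix (Fin 2) (Fin 2) ℤ_[p]) {A B : Matrix (Fin 2) (Fin 2) ℤ_[p]}
    (h : MCong p n A B) : MCong p n (M * A) (M * B) := by
  obtain ⟨C, hC⟩ := h; exact ⟨M * C, by simp [hC, mul_add, mul_smul_comm]⟩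

lemma mul_right {n : ℕ} (M : Matrix (Fin 2) (Fin 2) ℤ_[p]) {A B : Matrix (Fin 2) (Fin 2) ℤ_[p]}
    (h : MCong p n A B) : MCong p n (A * M) (B * M) := by
  obtain ⟨C, hC⟩ := h; exact ⟨C * M, by simp [hC, add_mul, smul_mul_assoc]⟩

lemma mul {n : ℕ} {A B A' B' : Matrix (Fin 2) (Fin 2) ℤ_[p]} (h : MCong p n A B)
    (h' : MCong p n A' B') : MCong p n (A * A') (B * B') :=
  (mul_right A' h).trans (mul_left B h')

lemma add {n : ℕ} {A B A' B' : Matrix (Fin 2) (Fin 2) ℤ_[p]} (h : MCong p n A B)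
    (h' : MCong p n A' B') : MCong p n (A + A') (B + B') := by
  obtain ⟨C, hC⟩ := h; obtain ⟨D, hD⟩ := h'
  exact ⟨C + D, by simp [hC, hD, smul_add]; abel⟩

lemma smul {n : ℕ} (c : ℤ_[p]) {A B : Matrix (Fin 2) (Fin 2) ℤ_[p]} (h : MCong p n A B) :
    MCong p n (c • A) (c • B) := by
  obtain ⟨C, hC⟩ := h; exact ⟨c • C, by simp [hC, smul_add, smul_comm c]⟩

/-- if g * Y ≡ 1 then g⁻¹ ≡ Y -/
lemma inv_right {n : ℕ} (g : GL (Fin 2) ℤ_[p]) {Y : Matrix (Fin 2) (Fin 2) ℤ_[p]}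
    (h : MCong p n ((g : Matrix (Fin 2) (Fin 2) ℤ_[p]) * Y) 1) :
    MCong p n ((g⁻¹ : GL (Fin 2) ℤ_[p]) : Matrix (Fin 2) (Fin 2) ℤ_[p]) Y := by
  obtain ⟨C, hC⟩ := h
  refine ⟨-((g⁻¹ : GL (Fin 2) ℤ_[p]) : Matrix (Fin 2) (Fin 2) ℤ_[p]) * C, ?_⟩
  have h1 : ((g⁻¹ : GL (Fin 2) ℤ_[p]) : Matrix (Fin 2) (Fin 2) ℤ_[p]) *
      ((g : Matrix (Fin 2) (Fin 2) ℤ_[p]) * Y) = Y := by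
    rw [← mul_assoc]
    norm_cast
    rw [inv_mul_cancel g]
    simp
  rw [hC] at h1
  rw [← h1]
  simp [mul_add, mul_smul_comm]

lemma inv {n : ℕ} (g A : GL (Fin 2) ℤ_[p])
    (h : MCong p n (g : Matrix (Fin 2) (Fin 2) ℤ_[p]) (A : Matrix (Fin 2) (Fin 2) ℤ_[p])) :
    MCong p n ((g⁻¹ : GL (Fin 2) ℤ_[p]) : Matrix (Fin 2) (Fin 2) ℤ_[p])
      ((A⁻¹ : GL (Fin 2) ℤ_[p]) : Matrix (Fin 2) (Fin 2) ℤ_[p]) := by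
  apply inv_right
  have := mul_right ((A⁻¹ : GL (Fin 2) ℤ_[p]) : Matrix (Fin 2) (Fin 2) ℤ_[p]) h
  have hA : (A : Matrix (Fin 2) (Fin 2) ℤ_[p]) *
      ((A⁻¹ : GL (Fin 2) ℤ_[p]) : Matrix (Fin 2) (Fin 2) ℤ_[p]) = 1 := by
    norm_cast; rw [mul_inv_cancel A]; simp
  rwa [hA] at this

end MCong
lemma mcong_iff_map {n : ℕ} {A B : Matrix (Fin 2) (Fin 2) ℤ_[p]} :
    MCong p n A B ↔ A.map (PadicInt.toZModPow n) = B.map (PadicInt.toZModPow n) := by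
  constructor
  · rintro ⟨C, rfl⟩
    ext i j
    simp only [Matrix.map_apply, Matrix.add_apply, Matrix.smul_apply, smul_eq_mul, _root_.map_add,
      _root_.map_mul, map_pow, map_natCast]
    rw [← Nat.cast_pow, ZMod.natCast_self, zero_mul, add_zero]
  · intro h
    have hdvd : ∀ i j, (p : ℤ_[p]) ^ n ∣ (A i j - B i j) := by
      intro i j
      rw [← Ideal.mem_span_singleton, ← PadicInt.ker_toZModPow, RingHom.mem_ker, map_sub]
      have := congrFun (congrFun h i) j
      simp only [Matrix.map_apply] at this
      rw [this, sub_self]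
    refine ⟨Matrix.of fun i j => (hdvd i j).choose, ?_⟩
    ext i j
    have := (hdvd i j).choose_spec
    simp only [Matrix.add_apply, Matrix.smul_apply, smul_eq_mul, Matrix.of_apply]
    linear_combination this

lemma mcong_iff_dvd {n : ℕ} {A B : Matrix (Fin 2) (Fin 2) ℤ_[p]} :
    MCong p n A B ↔ ∀ i j, (p : ℤ_[p]) ^ n ∣ A i j - B i j := by
  constructor
  · rintro ⟨C, rfl⟩ i j
    exact ⟨C i j, by simp [Matrix.add_apply, Matrix.smul_apply, smul_eq_mul]⟩
  · intro h
    refine ⟨Matrix.of fun i j => (h i j).choose, ?_⟩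
    ext i j
    have := (h i j).choose_spec
    simp only [Matrix.add_apply, Matrix.smul_apply, smul_eq_mul, Matrix.of_apply]
    linear_combination this

noncomputable def matE (p : ℕ) [Fact p.Prime] : Matrix (Fin 2) (Fin 2) ℤ_[p] := !![0,1;0,0]
noncomputable def matF (p : ℕ) [Fact p.Prime] : Matrix (Fin 2) (Fin 2) ℤ_[p] := !![0,0;1,0]
noncomputable def matH (p : ℕ) [Fact p.Prime] : Matrix (Fin 2) (Fin 2) ℤ_[p] := !![1,0;0,-1]

lemma matE_mul_matE : matE p * matE p = 0 := by
  ext i j; fin_cases i <;> fin_cases j <;> simp [matE, Matrix.mul_fin_two]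

lemma bracketHE : matH p * matE p - matE p * matH p = (2 : ℤ_[p]) • matE p := by
  ext i j; fin_cases i <;> fin_cases j <;>
    simp [matE, matH, Matrix.mul_fin_two] <;> ring

lemma bracketHF : matH p * matF p - matF p * matH p = -((2 : ℤ_[p]) • matF p) := by
  ext i j; fin_cases i <;> fin_cases j <;>
    simp [matF, matH, Matrix.mul_fin_two] <;> ring

lemma bracketEF : matE p * matF p - matF p * matE p = matH p := by
  ext i j; fin_cases i <;> fin_cases j <;>
    simp [matE, matF, matH, Matrix.mul_fin_two] <;> ring

/-- The reduction-mod-`p` homomorphism `GL₂(ℤ_p) →* GL₂(𝔽_p)`. -/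
noncomputable def glReduction (p : ℕ) [Fact p.Prime] :
    GL (Fin 2) ℤ_[p] →* GL (Fin 2) (ZMod p) :=
  Matrix.GeneralLinearGroup.map (PadicInt.toZMod)

lemma glReduction_eq_iff (g h : GL (Fin 2) ℤ_[p]) :
    glReduction p g = glReduction p h ↔ MCong p 1 (↑g) (↑h) := by
  rw [mcong_iff_dvd]
  have key : ∀ x y : ℤ_[p], PadicInt.toZMod x = PadicInt.toZMod y ↔ (p : ℤ_[p]) ^ 1 ∣ x - y := by
    intro x y
    rw [pow_one, ← Ideal.mem_span_singleton, ← PadicInt.maximalIdeal_eq_span_p,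
      ← PadicInt.ker_toZMod, RingHom.mem_ker, map_sub, sub_eq_zero]
  constructor
  · intro hEq i j
    rw [← key]
    have := congrFun (congrFun (congrArg (fun (u : GL (Fin 2) (ZMod p)) =>
      (u : Matrix (Fin 2) (Fin 2) (ZMod p))) hEq) i) j
    simpa [glReduction] using this
  · intro hc
    ext i j
    show glReduction p g i j = glReduction p h i j
    simp only [glReduction, Matrix.GeneralLinearGroup.map_apply]
    rw [key]
    exact hc i j

noncomputable def glU (p : ℕ) [Fact p.Prime] : GL (Fin 2) ℤ_[p] :=
  ⟨!![1,1;0,1], !![1,-1;0,1],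
    by ext i j; fin_cases i <;> fin_cases j <;> simp [Matrix.mul_fin_two, Matrix.one_fin_two],
    by ext i j; fin_cases i <;> fin_cases j <;> simp [Matrix.mul_fin_two, Matrix.one_fin_two]⟩

noncomputable def glW (p : ℕ) [Fact p.Prime] : GL (Fin 2) ℤ_[p] :=
  ⟨!![0,-1;1,0], !![0,1;-1,0],
    by ext i j; fin_cases i <;> fin_cases j <;> simp [Matrix.mul_fin_two, Matrix.one_fin_two],
    by ext i j; fin_cases i <;> fin_cases j <;> simp [Matrix.mul_fin_two, Matrix.one_fin_two]⟩

noncomputable def glV (p : ℕ) [Fact p.Prime] : GL (Fin 2) ℤ_[p] :=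
  ⟨!![1,0;1,1], !![1,0;-1,1],
    by ext i j; fin_cases i <;> fin_cases j <;> simp [Matrix.mul_fin_two, Matrix.one_fin_two],
    by ext i j; fin_cases i <;> fin_cases j <;> simp [Matrix.mul_fin_two, Matrix.one_fin_two]⟩

lemma glU_val : (glU p : Matrix (Fin 2) (Fin 2) ℤ_[p]) = 1 + matE p := by
  show !![(1:ℤ_[p]),1;0,1] = 1 + matE p
  ext i j; fin_cases i <;> fin_cases j <;> simp [matE, Matrix.one_fin_two]

lemma glU_det : ((glU p : Matrix (Fin 2) (Fin 2) ℤ_[p])).det = 1 := by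
  show (!![(1:ℤ_[p]),1;0,1]).det = 1
  simp [Matrix.det_fin_two_of]

lemma glW_det : ((glW p : Matrix (Fin 2) (Fin 2) ℤ_[p])).det = 1 := by
  show (!![(0:ℤ_[p]),-1;1,0]).det = 1
  simp [Matrix.det_fin_two_of]

lemma glV_det : ((glV p : Matrix (Fin 2) (Fin 2) ℤ_[p])).det = 1 := by
  show (!![(1:ℤ_[p]),0;1,1]).det = 1
  simp [Matrix.det_fin_two_of]

lemma conjW : (glW p : Matrix (Fin 2) (Fin 2) ℤ_[p]) * matE p *
    ((glW p)⁻¹ : GL (Fin 2) ℤ_[p]) = -(matF p) := by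
  show !![(0:ℤ_[p]),-1;1,0] * matE p * !![(0:ℤ_[p]),1;-1,0] = -(matF p)
  ext i j; fin_cases i <;> fin_cases j <;> simp [matE, matF, Matrix.mul_fin_two]

lemma conjV : (glV p : Matrix (Fin 2) (Fin 2) ℤ_[p]) * matE p *
    ((glV p)⁻¹ : GL (Fin 2) ℤ_[p]) = matE p - matH p - matF p := by
  show !![(1:ℤ_[p]),0;1,1] * matE p * !![(1:ℤ_[p]),0;-1,1] = matE p - matH p - matF p
  ext i j; fin_cases i <;> fin_cases j <;> simp [matE, matF, matH, Matrix.mul_fin_two]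

lemma pow_p_mcong (hp5 : 5 ≤ p) (g : GL (Fin 2) ℤ_[p]) (hg : MCong p 1 (↑g) (1 + matE p)) :
    MCong p 2 (↑(g ^ p) : Matrix (Fin 2) (Fin 2) ℤ_[p]) (1 + (p : ℤ_[p]) • matE p) := by
  obtain ⟨B, hB⟩ := hg
  have hB' : (↑g : Matrix (Fin 2) (Fin 2) ℤ_[p]) = 1 + matE p + (p : ℕ) • B := by
    rw [hB, pow_one, Nat.cast_smul_eq_nsmul]
  rw [mcong_iff_map]
  have hpow : (↑(g ^ p) : Matrix (Fin 2) (Fin 2) ℤ_[p])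
      = (↑g : Matrix (Fin 2) (Fin 2) ℤ_[p]) ^ p := Units.val_pow_eq_pow_val g p
  have hsm : (p : ℤ_[p]) • matE p = (p : ℕ) • matE p := Nat.cast_smul_eq_nsmul _ _ _
  rw [hpow, hB', hsm]
  simp only [← RingHom.mapMatrix_apply]
  simp only [map_pow, map_add, _root_.map_one, map_nsmul]
  have he : (PadicInt.toZModPow 2).mapMatrix (matE p) * (PadicInt.toZModPow 2).mapMatrix (matE p)
      = 0 := by
    rw [← _root_.map_mul, matE_mul_matE, map_zero]
  exact aux_zmod_pow hp5 _ _ he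

section LSsec

variable {H : Subgroup (GL (Fin 2) ℤ_[p])}

/-- achievable classes at level n -/
def LS (H : Subgroup (GL (Fin 2) ℤ_[p])) (n : ℕ) : Set (Matrix (Fin 2) (Fin 2) ℤ_[p]) :=
  {Z | ∃ h ∈ H, MCong p (n + 1) (↑h) (1 + (p : ℤ_[p]) ^ n • Z)}

lemma mcong_one_add {n : ℕ} {Z Z' : Matrix (Fin 2) (Fin 2) ℤ_[p]} (h : MCong p 1 Z Z') :
    MCong p (n + 1) (1 + (p : ℤ_[p]) ^ n • Z) (1 + (p : ℤ_[p]) ^ n • Z') := by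
  obtain ⟨C, hC⟩ := h
  refine ⟨C, ?_⟩
  rw [hC, smul_add, smul_smul, pow_one, ← pow_succ, add_assoc]

lemma LS.congr {n : ℕ} {Z Z' : Matrix (Fin 2) (Fin 2) ℤ_[p]} (hZ : Z ∈ LS H n)
    (h : MCong p 1 Z Z') : Z' ∈ LS H n := by
  obtain ⟨g, hg, hcg⟩ := hZ
  exact ⟨g, hg, hcg.trans (mcong_one_add h)⟩

lemma LS.add {n : ℕ} (hn : 1 ≤ n) {Z Z' : Matrix (Fin 2) (Fin 2) ℤ_[p]} (h1 : Z ∈ LS H n)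
    (h2 : Z' ∈ LS H n) : Z + Z' ∈ LS H n := by
  obtain ⟨g, hg, hcg⟩ := h1
  obtain ⟨k, hk, hck⟩ := h2
  refine ⟨g * k, mul_mem hg hk, ?_⟩
  have hmul := hcg.mul hck
  rw [← Units.val_mul] at hmul
  refine hmul.trans ⟨(p : ℤ_[p]) ^ (n - 1) • (Z * Z'), ?_⟩
  have hpow : ((p : ℤ_[p]) ^ n • Z) * ((p : ℤ_[p]) ^ n • Z')
      = (p : ℤ_[p]) ^ (n + 1) • ((p : ℤ_[p]) ^ (n - 1) • (Z * Z')) := by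
    rw [smul_mul_assoc, mul_smul_comm, smul_smul, smul_smul, ← pow_add, ← pow_add]
    congr 2
    omega
  rw [add_mul, one_mul, mul_add, mul_one, hpow, smul_add]
  abel

lemma LS.zero_mem (n : ℕ) : (0 : Matrix (Fin 2) (Fin 2) ℤ_[p]) ∈ LS H n :=
  ⟨1, one_mem H, by simpa using MCong.refl (p := p) (n + 1) 1⟩

lemma LS.neg {n : ℕ} (hn : 1 ≤ n) {Z : Matrix (Fin 2) (Fin 2) ℤ_[p]} (h : Z ∈ LS H n) :
    -Z ∈ LS H n := by
  obtain ⟨g, hg, hcg⟩ := h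
  refine ⟨g⁻¹, inv_mem hg, ?_⟩
  apply MCong.inv_right
  have h1 := hcg.mul_right (1 + (p : ℤ_[p]) ^ n • (-Z))
  refine h1.trans ⟨-((p : ℤ_[p]) ^ (n - 1) • (Z * Z)), ?_⟩
  have hpow : ((p : ℤ_[p]) ^ n • Z) * ((p : ℤ_[p]) ^ n • Z)
      = (p : ℤ_[p]) ^ (n + 1) • ((p : ℤ_[p]) ^ (n - 1) • (Z * Z)) := by
    rw [smul_mul_assoc, mul_smul_comm, smul_smul, smul_smul, ← pow_add, ← pow_add]
    congr 2
    omega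
  simp only [mul_add, add_mul, one_mul, mul_one, smul_neg, mul_neg, neg_neg, hpow]
  abel

lemma LS.nsmul (k : ℕ) {n : ℕ} (hn : 1 ≤ n) {Z : Matrix (Fin 2) (Fin 2) ℤ_[p]}
    (h : Z ∈ LS H n) : ((k : ℤ_[p])) • Z ∈ LS H n := by
  induction k with
  | zero => simpa using LS.zero_mem n
  | succ k ih =>
    have : (((k + 1 : ℕ) : ℤ_[p])) • Z = (k : ℤ_[p]) • Z + Z := by
      push_cast
      rw [add_smul, one_smul]
    rw [this]
    exact LS.add hn ih h

lemma LS.smul (c : ℤ_[p]) {n : ℕ} (hn : 1 ≤ n) {Z : Matrix (Fin 2) (Fin 2) ℤ_[p]}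
    (h : Z ∈ LS H n) : c • Z ∈ LS H n := by
  have hspec := PadicInt.appr_spec 1 c
  rw [Ideal.mem_span_singleton] at hspec
  obtain ⟨d, hd⟩ := hspec
  refine LS.congr (LS.nsmul (c.appr 1) hn h) ⟨-(d • Z), ?_⟩
  have hc : ((c.appr 1 : ℤ_[p])) = c - (p : ℤ_[p]) ^ 1 * d := by
    rw [← hd]; ring
  rw [hc]
  module

lemma LS.conj {n : ℕ} {Z : Matrix (Fin 2) (Fin 2) ℤ_[p]} (h : Z ∈ LS H n) {g : GL (Fin 2) ℤ_[p]}
    (hgH : g ∈ H) : (g.val * Z * (g⁻¹).val) ∈ LS H n := by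
  obtain ⟨k, hk, hck⟩ := h
  refine ⟨g * k * g⁻¹, mul_mem (mul_mem hgH hk) (inv_mem hgH), ?_⟩
  have hmul := (hck.mul_left g.val).mul_right (g⁻¹).val
  rw [← Units.val_mul, ← Units.val_mul] at hmul
  have heq : g.val * (1 + (p : ℤ_[p]) ^ n • Z) * (g⁻¹).val
      = 1 + (p : ℤ_[p]) ^ n • (g.val * Z * (g⁻¹).val) := by
    have hgg : g.val * (g⁻¹).val = 1 := by
      rw [← Units.val_mul, mul_inv_cancel, Units.val_one]
    rw [mul_add, mul_one, add_mul, hgg, mul_smul_comm, smul_mul_assoc, mul_assoc]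
  rwa [heq] at hmul

lemma LS.conj_red
    (hsurj : ∀ A : GL (Fin 2) ℤ_[p], Matrix.det (A : Matrix (Fin 2) (Fin 2) ℤ_[p]) = 1 →
      ∃ h ∈ H, glReduction p h = glReduction p A)
    {n : ℕ} {Z : Matrix (Fin 2) (Fin 2) ℤ_[p]} (h : Z ∈ LS H n) (s : GL (Fin 2) ℤ_[p])
    (hs : Matrix.det (s : Matrix (Fin 2) (Fin 2) ℤ_[p]) = 1) :
    (s.val * Z * (s⁻¹).val) ∈ LS H n := by
  obtain ⟨g, hgH, hred⟩ := hsurj s hs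
  have hgs : MCong p 1 (↑g) (↑s) := (glReduction_eq_iff g s).mp hred
  refine LS.congr (LS.conj h hgH) ?_
  exact ((hgs.mul (MCong.refl 1 Z)).mul (MCong.inv g s hgs))

lemma LS.matE_mem (hp5 : 5 ≤ p)
    (hsurj : ∀ A : GL (Fin 2) ℤ_[p], Matrix.det (A : Matrix (Fin 2) (Fin 2) ℤ_[p]) = 1 →
      ∃ h ∈ H, glReduction p h = glReduction p A) :
    matE p ∈ LS H 1 := by
  obtain ⟨g, hgH, hred⟩ := hsurj (glU p) glU_det
  have hg1 : MCong p 1 (↑g) (1 + matE p) := by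
    have := (glReduction_eq_iff g (glU p)).mp hred
    rwa [glU_val] at this
  refine ⟨g ^ p, pow_mem hgH p, ?_⟩
  have := pow_p_mcong hp5 g hg1
  rwa [pow_one]

end LSsec

section LSsec2

variable {H : Subgroup (GL (Fin 2) ℤ_[p])}

lemma mcong_unit_one {m : ℕ} (hm : 1 ≤ m) (W V : Matrix (Fin 2) (Fin 2) ℤ_[p]) :
    MCong p 1 ((1 + (p : ℤ_[p]) ^ m • W) + (p : ℤ_[p]) ^ (m + 1) • V) 1 := by
  refine ⟨(p : ℤ_[p]) ^ (m - 1) • W + (p : ℤ_[p]) ^ m • V, ?_⟩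
  have h1 : (p : ℤ_[p]) ^ 1 * (p : ℤ_[p]) ^ (m - 1) = (p : ℤ_[p]) ^ m := by
    rw [← pow_add]; congr 1; omega
  have h2 : (p : ℤ_[p]) ^ 1 * (p : ℤ_[p]) ^ m = (p : ℤ_[p]) ^ (m + 1) := by
    rw [← pow_add, add_comm]
  rw [smul_add, smul_smul, smul_smul, h1, h2, add_assoc]

lemma LS.bracket {a : ℕ} (ha : 1 ≤ a) {X Y : Matrix (Fin 2) (Fin 2) ℤ_[p]}
    (hX : X ∈ LS H a) (hY : Y ∈ LS H 1) : (X * Y - Y * X) ∈ LS H (a + 1) := by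
  obtain ⟨g, hgH, hcg⟩ := hX
  obtain ⟨k, hkH, hck⟩ := hY
  obtain ⟨A, hA⟩ := hcg
  obtain ⟨B, hB⟩ := hck
  refine ⟨g * k * g⁻¹ * k⁻¹,
    mul_mem (mul_mem (mul_mem hgH hkH) (inv_mem hgH)) (inv_mem hkH), ?_⟩
  have hgg : g.val * (g⁻¹).val = 1 := by
    rw [← Units.val_mul, mul_inv_cancel, Units.val_one]
  have hkk : k.val * (k⁻¹).val = 1 := by
    rw [← Units.val_mul, mul_inv_cancel, Units.val_one]
  have claim1 : MCong p (a + 2) (g.val * k.val)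
      (k.val * g.val + (p : ℤ_[p]) ^ (a + 1) • (X * Y - Y * X)) := by
    refine ⟨X * B + A * Y - Y * A - B * X + (p : ℤ_[p]) • (A * B - B * A), ?_⟩
    rw [hA, hB]
    simp only [add_mul, mul_add, one_mul, mul_one, smul_mul_assoc, mul_smul_comm, smul_smul,
      smul_add, smul_sub]
    module
  have claim2 := (claim1.mul_right (g⁻¹).val).mul_right (k⁻¹).val
  have claim3 : (k.val * g.val + (p : ℤ_[p]) ^ (a + 1) • (X * Y - Y * X)) * (g⁻¹).val * (k⁻¹).val
      = 1 + (p : ℤ_[p]) ^ (a + 1) • ((X * Y - Y * X) * (g⁻¹).val * (k⁻¹).val) := by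
    rw [add_mul, add_mul, smul_mul_assoc, smul_mul_assoc, mul_assoc k.val g.val, hgg, mul_one,
      hkk]
  rw [claim3] at claim2
  have hginv : MCong p 1 (g⁻¹).val 1 := by
    have h0 : MCong p 1 g.val ((1 : GL (Fin 2) ℤ_[p]).val) := by
      rw [Units.val_one, hA]
      exact mcong_unit_one ha X A
    have := MCong.inv g 1 h0
    simpa using this
  have hkinv : MCong p 1 (k⁻¹).val 1 := by
    have h0 : MCong p 1 k.val ((1 : GL (Fin 2) ℤ_[p]).val) := by
      rw [Units.val_one, hB]
      exact mcong_unit_one le_rfl Y B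
    have := MCong.inv k 1 h0
    simpa using this
  have claim4 : MCong p 1 ((X * Y - Y * X) * (g⁻¹).val * (k⁻¹).val) (X * Y - Y * X) := by
    have := (((MCong.refl 1 (X * Y - Y * X)).mul hginv).mul hkinv)
    simpa [mul_one] using this
  have final := claim2.trans (mcong_one_add claim4)
  simpa only [Units.val_mul] using final

end LSsec2

section LSsec3

variable {H : Subgroup (GL (Fin 2) ℤ_[p])}

lemma LS.matF_mem (hp5 : 5 ≤ p)
    (hsurj : ∀ A : GL (Fin 2) ℤ_[p], Matrix.det (A : Matrix (Fin 2) (Fin 2) ℤ_[p]) = 1 →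
      ∃ h ∈ H, glReduction p h = glReduction p A) :
    matF p ∈ LS H 1 := by
  have hE := LS.matE_mem hp5 hsurj
  have h1 := LS.conj_red hsurj hE (glW p) glW_det
  rw [conjW] at h1
  have h2 := LS.neg le_rfl h1
  rwa [neg_neg] at h2

lemma LS.matH_mem (hp5 : 5 ≤ p)
    (hsurj : ∀ A : GL (Fin 2) ℤ_[p], Matrix.det (A : Matrix (Fin 2) (Fin 2) ℤ_[p]) = 1 →
      ∃ h ∈ H, glReduction p h = glReduction p A) :
    matH p ∈ LS H 1 := by
  have hE := LS.matE_mem hp5 hsurj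
  have hF := LS.matF_mem hp5 hsurj
  have hV := LS.conj_red hsurj hE (glV p) glV_det
  rw [conjV] at hV
  have := LS.add le_rfl (LS.add le_rfl hE (LS.neg le_rfl hV)) (LS.neg le_rfl hF)
  rwa [show matE p + -(matE p - matH p - matF p) + -(matF p) = matH p from by abel] at this

lemma LS.gen {n : ℕ} (hn : 1 ≤ n) (hE : matE p ∈ LS H n) (hF : matF p ∈ LS H n)
    (hH : matH p ∈ LS H n) {Z : Matrix (Fin 2) (Fin 2) ℤ_[p]}
    (hZ : (p : ℤ_[p]) ∣ Z 0 0 + Z 1 1) : Z ∈ LS H n := by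
  obtain ⟨d, hd⟩ := hZ
  have combo : Z 0 1 • matE p + Z 1 0 • matF p + Z 0 0 • matH p ∈ LS H n :=
    LS.add hn (LS.add hn (LS.smul _ hn hE) (LS.smul _ hn hF)) (LS.smul _ hn hH)
  refine LS.congr combo ⟨-(d • !![0,0;0,1]), ?_⟩
  ext i j
  fin_cases i <;> fin_cases j <;>
    simp [matE, matF, matH, Matrix.add_apply, Matrix.smul_apply, smul_eq_mul, pow_one] <;>
    linear_combination -hd

/-- scalar fixing: from (2:ℤ_p) • Z ∈ LS to Z ∈ LS -/
lemma LS.half (hp5 : 5 ≤ p) {n : ℕ} (hn : 1 ≤ n) {Z : Matrix (Fin 2) (Fin 2) ℤ_[p]}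
    (h : (2 : ℤ_[p]) • Z ∈ LS H n) : Z ∈ LS H n := by
  have podd : p % 2 = 1 := Nat.odd_iff.mp ((Fact.out : p.Prime).odd_of_ne_two (by omega))
  set k := (p + 1) / 2 with hkdef
  have hk : k * 2 = p + 1 := by omega
  have hmem := LS.nsmul k hn h
  refine LS.congr hmem ⟨Z, ?_⟩
  have hc : ((k : ℤ_[p]) * 2) = (p : ℤ_[p]) + 1 := by
    exact_mod_cast congrArg (fun m : ℕ => (m : ℤ_[p])) hk
  rw [smul_smul, hc, add_smul, one_smul, pow_one]
  abel

end LSsec3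

section LSsec4

variable {H : Subgroup (GL (Fin 2) ℤ_[p])}

lemma LS.slAll (hp5 : 5 ≤ p)
    (hsurj : ∀ A : GL (Fin 2) ℤ_[p], Matrix.det (A : Matrix (Fin 2) (Fin 2) ℤ_[p]) = 1 →
      ∃ h ∈ H, glReduction p h = glReduction p A) :
    ∀ n, 1 ≤ n → ∀ Z : Matrix (Fin 2) (Fin 2) ℤ_[p],
      (p : ℤ_[p]) ∣ Z 0 0 + Z 1 1 → Z ∈ LS H n := by
  intro n
  induction n with
  | zero => omega
  | succ n ih =>
    intro _ Z hZ
    rcases Nat.eq_zero_or_pos n with rfl | hn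
    · exact LS.gen le_rfl (LS.matE_mem hp5 hsurj) (LS.matF_mem hp5 hsurj)
        (LS.matH_mem hp5 hsurj) hZ
    · have htrE : (p : ℤ_[p]) ∣ matE p 0 0 + matE p 1 1 := by simp [matE]
      have htrF : (p : ℤ_[p]) ∣ matF p 0 0 + matF p 1 1 := by simp [matF]
      have htrH : (p : ℤ_[p]) ∣ matH p 0 0 + matH p 1 1 := by simp [matH]
      have hEn := ih hn (matE p) htrE
      have hHn := ih hn (matH p) htrH
      have hE1 := LS.matE_mem hp5 hsurj
      have hF1 := LS.matF_mem hp5 hsurj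
      have h2E := LS.bracket hn hHn hE1
      rw [bracketHE] at h2E
      have hEn1 : matE p ∈ LS H (n + 1) := LS.half hp5 (by omega) h2E
      have h2F := LS.bracket hn hHn hF1
      rw [bracketHF] at h2F
      have h2F' := LS.neg (by omega) h2F
      rw [neg_neg] at h2F'
      have hFn1 : matF p ∈ LS H (n + 1) := LS.half hp5 (by omega) h2F'
      have hHn1 := LS.bracket hn hEn hF1
      rw [bracketEF] at hHn1
      exact LS.gen (by omega) hEn1 hFn1 hHn1 hZ

end LSsec4

lemma mainApprox {H : Subgroup (GL (Fin 2) ℤ_[p])} (hp5 : 5 ≤ p)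
    (hdet : ∀ h ∈ H, Matrix.det (h : Matrix (Fin 2) (Fin 2) ℤ_[p]) = 1)
    (hsurj : ∀ A : GL (Fin 2) ℤ_[p], Matrix.det (A : Matrix (Fin 2) (Fin 2) ℤ_[p]) = 1 →
      ∃ h ∈ H, glReduction p h = glReduction p A) :
    ∀ n, 1 ≤ n → ∀ A : GL (Fin 2) ℤ_[p], Matrix.det (A : Matrix (Fin 2) (Fin 2) ℤ_[p]) = 1 →
      ∃ h ∈ H, MCong p n h.val A.val := by
  intro n
  induction n with
  | zero => omega
  | succ n ih =>
    intro _ A hA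
    rcases Nat.eq_zero_or_pos n with rfl | hn
    · obtain ⟨h, hH, hred⟩ := hsurj A hA
      exact ⟨h, hH, (glReduction_eq_iff h A).mp hred⟩
    obtain ⟨h, hH, hc⟩ := ih hn A hA
    obtain ⟨C, hC⟩ := hc
    set X : Matrix (Fin 2) (Fin 2) ℤ_[p] := -((h⁻¹).val * C) with hX
    have hinv1 : (h⁻¹).val * h.val = 1 := by
      rw [← Units.val_mul, inv_mul_cancel, Units.val_one]
    have hinv2 : h.val * (h⁻¹).val = 1 := by
      rw [← Units.val_mul, mul_inv_cancel, Units.val_one]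
    have key : (h⁻¹).val * A.val = 1 + (p : ℤ_[p]) ^ n • X := by
      have hA' : A.val = h.val - (p : ℤ_[p]) ^ n • C := by rw [hC]; abel
      rw [hA', mul_sub, hinv1, mul_smul_comm, hX, smul_neg]
      abel
    have hdethinv : ((h⁻¹).val).det = 1 := by
      have hdeth : (h.val).det = 1 := hdet h hH
      have hd : ((h⁻¹).val).det * (h.val).det = 1 := by
        rw [← Matrix.det_mul, hinv1, Matrix.det_one]
      simpa [hdeth] using hd
    have hdet1 : ((h⁻¹).val * A.val).det = 1 := by
      rw [Matrix.det_mul, hdethinv, hA, one_mul]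
    rw [key] at hdet1
    have htr : (p : ℤ_[p]) ∣ X 0 0 + X 1 1 := by
      have hexp : (1 + (p : ℤ_[p]) ^ n • X).det
          = 1 + (p : ℤ_[p]) ^ n * (X 0 0 + X 1 1)
            + (p : ℤ_[p]) ^ n * ((p : ℤ_[p]) ^ n * (X 0 0 * X 1 1 - X 0 1 * X 1 0)) := by
        rw [Matrix.det_fin_two]
        simp [Matrix.add_apply, Matrix.smul_apply, Matrix.one_apply, smul_eq_mul]
        ring
      rw [hexp] at hdet1
      have hppow : (p : ℤ_[p]) ^ n ≠ 0 :=
        pow_ne_zero _ (Nat.cast_ne_zero.mpr (Nat.Prime.ne_zero Fact.out))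
      have hmul : (p : ℤ_[p]) ^ n * (X 0 0 + X 1 1)
          = (p : ℤ_[p]) ^ n * (-((p : ℤ_[p]) ^ n * (X 0 0 * X 1 1 - X 0 1 * X 1 0))) := by
        linear_combination hdet1
      have hT := mul_left_cancel₀ hppow hmul
      rw [hT]
      have hpn : (p : ℤ_[p]) ^ n = (p : ℤ_[p]) * (p : ℤ_[p]) ^ (n - 1) := by
        conv_lhs => rw [show n = 1 + (n - 1) by omega, pow_add, pow_one]
      exact ⟨-((p : ℤ_[p]) ^ (n - 1) * (X 0 0 * X 1 1 - X 0 1 * X 1 0)), by rw [hpn]; ring⟩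
    obtain ⟨h', hH', hc'⟩ := LS.slAll hp5 hsurj n hn X htr
    refine ⟨h * h', mul_mem hH hH', ?_⟩
    rw [← key] at hc'
    have hfin := hc'.mul_left h.val
    rw [← mul_assoc, hinv2, one_mul] at hfin
    simpa only [Units.val_mul] using hfin

lemma matrix_tendsto_of_mcong (f : ℕ → Matrix (Fin 2) (Fin 2) ℤ_[p])
    (L : Matrix (Fin 2) (Fin 2) ℤ_[p]) (hf : ∀ n, MCong p (n + 1) (f n) L) :
    Filter.Tendsto f Filter.atTop (nhds L) := by
  refine tendsto_pi_nhds.mpr ?_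
  intro i
  rw [tendsto_pi_nhds]
  intro j
  rw [tendsto_iff_norm_sub_tendsto_zero]
  have hplt : ((p : ℝ))⁻¹ < 1 := by
    rw [inv_lt_one_iff₀]
    right
    exact_mod_cast (Fact.out : p.Prime).one_lt
  have hp0 : 0 ≤ ((p : ℝ))⁻¹ := by positivity
  apply squeeze_zero (g := fun n => ((p : ℝ)⁻¹) ^ (n + 1))
  · intro n; exact norm_nonneg _
  · intro n
    have hdvd := (mcong_iff_dvd.mp (hf n)) i j
    have hmem : f n i j - L i j ∈ Ideal.span {(p : ℤ_[p]) ^ (n + 1)} :=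
      Ideal.mem_span_singleton.mpr hdvd
    have hle := (PadicInt.norm_le_pow_iff_mem_span_pow (f n i j - L i j) (n + 1)).mpr hmem
    calc ‖f n i j - L i j‖ ≤ (p : ℝ) ^ (-((n : ℤ) + 1)) := by exact_mod_cast hle
      _ = ((p : ℝ)⁻¹) ^ (n + 1) := by
        rw [inv_pow, ← zpow_natCast ((p : ℝ)), ← _root_.zpow_neg]
        norm_cast
  · exact (tendsto_pow_atTop_nhds_zero_of_lt_one hp0 hplt).comp (Filter.tendsto_add_atTop_nat 1)

/-- For `ℓ ≥ 5`, a closed subgroup of `SL₂(ℤ_ℓ)` surjecting onto `SL₂(𝔽_ℓ)`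
is all of `SL₂(ℤ_ℓ)`. -/
theorem stmt3 (p : ℕ) [Fact p.Prime] (hp : 5 ≤ p)
    (H : Subgroup (GL (Fin 2) ℤ_[p]))
    (hclosed : IsClosed (H : Set (GL (Fin 2) ℤ_[p])))
    (hdet : ∀ h ∈ H, Matrix.det (h : Matrix (Fin 2) (Fin 2) ℤ_[p]) = 1)
    (hsurj : ∀ A : GL (Fin 2) ℤ_[p], Matrix.det (A : Matrix (Fin 2) (Fin 2) ℤ_[p]) = 1 →
      ∃ h ∈ H, glReduction p h = glReduction p A) :
    ∀ A : GL (Fin 2) ℤ_[p], Matrix.det (A : Matrix (Fin 2) (Fin 2) ℤ_[p]) = 1 → A ∈ H := by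
  intro A hA
  have happrox : ∀ n : ℕ, ∃ h : GL (Fin 2) ℤ_[p], h ∈ H ∧ MCong p (n + 1) h.val A.val := by
    intro n
    obtain ⟨h, hH, hc⟩ := mainApprox hp hdet hsurj (n + 1) (by omega) A hA
    exact ⟨h, hH, hc⟩
  choose seq hseqH hseqC using happrox
  suffices hcl : A ∈ closure (H : Set (GL (Fin 2) ℤ_[p])) by
    rwa [hclosed.closure_eq] at hcl
  have htend : Filter.Tendsto seq Filter.atTop (nhds A) := by
    rw [Units.isEmbedding_embedProduct.tendsto_nhds_iff]
    show Filter.Tendsto (fun n => ((seq n).val, MulOpposite.op ((seq n)⁻¹).val)) Filter.atTop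
      (nhds ((A.val, MulOpposite.op ((A⁻¹).val))))
    exact Filter.Tendsto.prodMk_nhds (matrix_tendsto_of_mcong _ _ hseqC)
      ((MulOpposite.continuous_op.tendsto _).comp
        (matrix_tendsto_of_mcong _ _ (fun n => MCong.inv (seq n) A (hseqC n))))
  exact mem_closure_of_tendsto htend (Filter.Eventually.of_forall hseqH)
end

section
/- Let ℓ be an odd prime. The topological closure of the commutator subgroup of GL₂(ℤ_ℓ) equals SL₂(ℤ_ℓ), the subgroup of all elements of determinant 1. -/
open Matrix

namespace Stmt4Aux
open Matrix
open scoped commutatorElement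



variable {p : ℕ} [Fact p.Prime]

noncomputable def U (b : ℤ_[p]) : GL (Fin 2) ℤ_[p] :=
  ⟨!![1,b;0,1], !![1,-b;0,1],
   by ext i j; fin_cases i <;> fin_cases j <;> simp [Matrix.mul_apply, Fin.sum_univ_two],
   by ext i j; fin_cases i <;> fin_cases j <;> simp [Matrix.mul_apply, Fin.sum_univ_two]⟩

noncomputable def L (c : ℤ_[p]) : GL (Fin 2) ℤ_[p] :=
  ⟨!![1,0;c,1], !![1,0;-c,1],
   by ext i j; fin_cases i <;> fin_cases j <;> simp [Matrix.mul_apply, Fin.sum_univ_two],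
   by ext i j; fin_cases i <;> fin_cases j <;> simp [Matrix.mul_apply, Fin.sum_univ_two]⟩

noncomputable def D (t : ℤ_[p]ˣ) : GL (Fin 2) ℤ_[p] :=
  ⟨!![(t:ℤ_[p]),0;0,1], !![(↑t⁻¹:ℤ_[p]),0;0,1],
   by ext i j; fin_cases i <;> fin_cases j <;>
     simp [Matrix.mul_apply, Fin.sum_univ_two, Units.mul_inv, Units.inv_mul],
   by ext i j; fin_cases i <;> fin_cases j <;>
     simp [Matrix.mul_apply, Fin.sum_univ_two, Units.mul_inv, Units.inv_mul]⟩

noncomputable def D' (t : ℤ_[p]ˣ) : GL (Fin 2) ℤ_[p] :=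
  ⟨!![1,0;0,(t:ℤ_[p])], !![1,0;0,(↑t⁻¹:ℤ_[p])],
   by ext i j; fin_cases i <;> fin_cases j <;>
     simp [Matrix.mul_apply, Fin.sum_univ_two, Units.mul_inv, Units.inv_mul],
   by ext i j; fin_cases i <;> fin_cases j <;>
     simp [Matrix.mul_apply, Fin.sum_univ_two, Units.mul_inv, Units.inv_mul]⟩

lemma U_val (b : ℤ_[p]) : (U b).val = !![1,b;0,1] := rfl
lemma L_val (c : ℤ_[p]) : (L c).val = !![1,0;c,1] := rfl

lemma U_mul (a b : ℤ_[p]) : U a * U b = U (a + b) := by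
  apply Units.ext
  show (U a).val * (U b).val = (U (a+b)).val
  simp only [U]
  ext i j
  fin_cases i <;> fin_cases j <;> simp [Matrix.mul_apply, Fin.sum_univ_two, add_comm]

lemma L_mul (a b : ℤ_[p]) : L a * L b = L (a + b) := by
  apply Units.ext
  show (L a).val * (L b).val = (L (a+b)).val
  simp only [L]
  ext i j
  fin_cases i <;> fin_cases j <;> simp [Matrix.mul_apply, Fin.sum_univ_two, add_comm]

lemma U_zero : (U 0 : GL (Fin 2) ℤ_[p]) = 1 := by
  apply Units.ext
  show (U 0).val = (1 : Matrix (Fin 2) (Fin 2) ℤ_[p])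
  simp only [U]
  ext i j
  fin_cases i <;> fin_cases j <;> simp

lemma L_zero : (L 0 : GL (Fin 2) ℤ_[p]) = 1 := by
  apply Units.ext
  show (L 0).val = (1 : Matrix (Fin 2) (Fin 2) ℤ_[p])
  simp only [L]
  ext i j
  fin_cases i <;> fin_cases j <;> simp

lemma U_inv (b : ℤ_[p]) : (U b)⁻¹ = U (-b) :=
  inv_eq_of_mul_eq_one_right (by rw [U_mul, add_neg_cancel, U_zero])

lemma L_inv (c : ℤ_[p]) : (L c)⁻¹ = L (-c) :=
  inv_eq_of_mul_eq_one_right (by rw [L_mul, add_neg_cancel, L_zero])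

lemma D_mul_U (t : ℤ_[p]ˣ) (b : ℤ_[p]) : D t * U b = U ((t : ℤ_[p]) * b) * D t := by
  apply Units.ext
  show (D t).val * (U b).val = (U ((t : ℤ_[p])*b)).val * (D t).val
  simp only [U, D]
  ext i j
  fin_cases i <;> fin_cases j <;> simp [Matrix.mul_apply, Fin.sum_univ_two]

lemma D'_mul_L (t : ℤ_[p]ˣ) (c : ℤ_[p]) : D' t * L c = L ((t : ℤ_[p]) * c) * D' t := by
  apply Units.ext
  show (D' t).val * (L c).val = (L ((t : ℤ_[p])*c)).val * (D' t).val
  simp only [L, D']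
  ext i j
  fin_cases i <;> fin_cases j <;> simp [Matrix.mul_apply, Fin.sum_univ_two]

lemma isUnit_two (hodd : Odd p) : IsUnit (2 : ℤ_[p]) := by
  rw [PadicInt.isUnit_iff]
  have h1 : ‖(2 : ℤ_[p])‖ ≤ 1 := PadicInt.norm_le_one _
  have h2 : ¬ ‖((2 : ℤ) : ℤ_[p])‖ < 1 := by
    rw [PadicInt.norm_int_lt_one_iff_dvd]
    intro h
    have hp2 : p ∣ 2 := by exact_mod_cast h
    have := (Fact.out : p.Prime).two_le
    have := Nat.le_of_dvd (by norm_num) hp2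
    have hp : p = 2 := by omega
    rw [hp] at hodd
    exact absurd hodd (by decide)
  push_cast at h2
  linarith [lt_or_eq_of_le h1, not_lt.mp h2]

lemma U_mem (hodd : Odd p) (b : ℤ_[p]) : U b ∈ commutator (GL (Fin 2) ℤ_[p]) := by
  obtain ⟨t, ht⟩ := isUnit_two hodd
  have key : ⁅D t, U b⁆ = U b := by
    rw [commutatorElement_def, D_mul_U, mul_assoc (U ((t : ℤ_[p]) * b)), mul_inv_cancel,
      mul_one, U_inv, U_mul]
    congr 1
    rw [ht]; ring
  rw [← key, commutator_def]
  exact Subgroup.commutator_mem_commutator (Subgroup.mem_top _) (Subgroup.mem_top _)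

lemma L_mem (hodd : Odd p) (c : ℤ_[p]) : L c ∈ commutator (GL (Fin 2) ℤ_[p]) := by
  obtain ⟨t, ht⟩ := isUnit_two hodd
  have key : ⁅D' t, L c⁆ = L c := by
    rw [commutatorElement_def, D'_mul_L, mul_assoc (L ((t : ℤ_[p]) * c)), mul_inv_cancel,
      mul_one, L_inv, L_mul]
    congr 1
    rw [ht]; ring
  rw [← key, commutator_def]
  exact Subgroup.commutator_mem_commutator (Subgroup.mem_top _) (Subgroup.mem_top _)


lemma nonunit_mem (x : ℤ_[p]) (hx : ¬IsUnit x) : x ∈ IsLocalRing.maximalIdeal ℤ_[p] := by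
  rwa [IsLocalRing.mem_maximalIdeal, mem_nonunits_iff]

lemma one_not_mem : (1 : ℤ_[p]) ∉ IsLocalRing.maximalIdeal ℤ_[p] := by
  intro h
  rw [IsLocalRing.mem_maximalIdeal, mem_nonunits_iff] at h
  exact h isUnit_one

lemma isUnit_fst {a b c d : ℤ_[p]} (h : a * d - b * c = 1) (hc : ¬IsUnit c) : IsUnit a := by
  by_contra ha
  refine one_not_mem (p := p) ?_
  rw [← h]
  exact Ideal.sub_mem _ (Ideal.mul_mem_right _ _ (nonunit_mem a ha))
    (Ideal.mul_mem_left _ _ (nonunit_mem c hc))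

lemma isUnit_add {a c : ℤ_[p]} (ha : IsUnit a) (hc : ¬IsUnit c) : IsUnit (a + c) := by
  by_contra h
  have hmem : a ∈ IsLocalRing.maximalIdeal ℤ_[p] := by
    have h2 := Ideal.sub_mem _ (nonunit_mem _ h) (nonunit_mem _ hc)
    simpa using h2
  rw [IsLocalRing.mem_maximalIdeal, mem_nonunits_iff] at hmem
  exact hmem ha

lemma sl_mem_of_unit (hodd : Odd p) (g : GL (Fin 2) ℤ_[p])
    (hdet : (g : Matrix (Fin 2) (Fin 2) ℤ_[p]).det = 1)
    (hc : IsUnit (g.val 1 0)) : g ∈ commutator (GL (Fin 2) ℤ_[p]) := by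
  obtain ⟨cu, hcu⟩ := hc
  set a := g.val 0 0 with ha
  set b := g.val 0 1 with hb
  set c := g.val 1 0 with hcc
  set d := g.val 1 1 with hd
  obtain ⟨x, hx⟩ : ∃ x : ℤ_[p], x * c = 1 - a :=
    ⟨(1 - a) * (↑cu⁻¹ : ℤ_[p]), by
      rw [mul_assoc, ← hcu, ← Units.val_mul, inv_mul_cancel, Units.val_one, mul_one]⟩
  have hdet2 : a * d - b * c = 1 := by
    rw [← Matrix.det_fin_two]; exact hdet
  have hg : g = U (-x) * L c * U (b + x * d) := by
    apply Units.ext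
    show (g : Matrix (Fin 2) (Fin 2) ℤ_[p]) = (U (-x)).val * (L c).val * (U (b + x*d)).val
    rw [U_val, L_val, U_val]
    rw [Matrix.eta_fin_two (g : Matrix (Fin 2) (Fin 2) ℤ_[p])]
    rw [← ha, ← hb, ← hcc, ← hd]
    ext i j
    fin_cases i <;> fin_cases j <;> simp [Matrix.mul_apply, Fin.sum_univ_two]
    all_goals first
      | rfl
      | linear_combination hx
      | linear_combination (x*d)*hx - x*hdet2
      | linear_combination (-d)*hx + hdet2
  rw [hg]
  exact mul_mem (mul_mem (U_mem hodd _) (L_mem hodd _)) (U_mem hodd _)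

lemma sl_mem (hodd : Odd p) (g : GL (Fin 2) ℤ_[p])
    (hdet : (g : Matrix (Fin 2) (Fin 2) ℤ_[p]).det = 1) :
    g ∈ commutator (GL (Fin 2) ℤ_[p]) := by
  by_cases hc : IsUnit (g.val 1 0)
  · exact sl_mem_of_unit hodd g hdet hc
  · have hdet2 : g.val 0 0 * g.val 1 1 - g.val 0 1 * g.val 1 0 = 1 := by
      rw [← Matrix.det_fin_two]; exact hdet
    have ha : IsUnit (g.val 0 0) := isUnit_fst hdet2 hc
    have hval : (L 1 * g).val 1 0 = g.val 0 0 + g.val 1 0 := by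
      rw [Units.val_mul, L_val]
      simp [Matrix.mul_apply, Fin.sum_univ_two]
    have h2 : IsUnit ((L 1 * g).val 1 0) := by
      rw [hval]; exact isUnit_add ha hc
    have hdetL : ((L 1 * g : GL (Fin 2) ℤ_[p]) : Matrix (Fin 2) (Fin 2) ℤ_[p]).det = 1 := by
      rw [Units.val_mul, Matrix.det_mul, L_val, Matrix.det_fin_two_of]
      rw [hdet]; ring
    have hmem := sl_mem_of_unit hodd (L 1 * g) hdetL h2
    have : (L 1)⁻¹ * (L 1 * g) ∈ commutator (GL (Fin 2) ℤ_[p]) :=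
      mul_mem (inv_mem (L_mem hodd 1)) hmem
    rwa [inv_mul_cancel_left] at this

end Stmt4Aux

open Stmt4Aux in
/-- For an odd prime `ℓ`, the topological closure of the commutator subgroup of
`GL₂(ℤ_ℓ)` is `SL₂(ℤ_ℓ)`, the subgroup of elements of determinant `1`. -/
theorem stmt4 (p : ℕ) [Fact p.Prime] (hodd : Odd p) :
    (commutator (GL (Fin 2) ℤ_[p])).topologicalClosure =
      (Matrix.GeneralLinearGroup.det :
        GL (Fin 2) ℤ_[p] →* ℤ_[p]ˣ).ker := by
  have hcont : Continuous (Matrix.GeneralLinearGroup.det : GL (Fin 2) ℤ_[p] →* ℤ_[p]ˣ) := by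
    rw [Units.continuous_iff]
    refine ⟨(Units.continuous_val.matrix_det :
      Continuous fun g : GL (Fin 2) ℤ_[p] => (g : Matrix (Fin 2) (Fin 2) ℤ_[p]).det), ?_⟩
    have h : Continuous fun g : GL (Fin 2) ℤ_[p] => (↑(g⁻¹) : Matrix (Fin 2) (Fin 2) ℤ_[p]).det :=
      Units.continuous_coe_inv.matrix_det
    convert h using 2 with g
    rfl
  have hclosed : IsClosed ((Matrix.GeneralLinearGroup.det :
      GL (Fin 2) ℤ_[p] →* ℤ_[p]ˣ).ker : Set (GL (Fin 2) ℤ_[p])) := by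
    have : ((Matrix.GeneralLinearGroup.det :
        GL (Fin 2) ℤ_[p] →* ℤ_[p]ˣ).ker : Set (GL (Fin 2) ℤ_[p])) =
        (Matrix.GeneralLinearGroup.det : GL (Fin 2) ℤ_[p] →* ℤ_[p]ˣ) ⁻¹' {1} := rfl
    rw [this]
    exact IsClosed.preimage hcont isClosed_singleton
  apply le_antisymm
  · apply Subgroup.topologicalClosure_minimal
    · rw [commutator_def, Subgroup.commutator_le]
      intro g _ h _
      rw [MonoidHom.mem_ker, map_commutatorElement]
      exact commutatorElement_eq_one_iff_commute.mpr (mul_comm _ _)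
    · exact hclosed
  · intro g hg
    apply Subgroup.le_topologicalClosure
    rw [MonoidHom.mem_ker] at hg
    have hdet : (g : Matrix (Fin 2) (Fin 2) ℤ_[p]).det = 1 := by
      have := congrArg Units.val hg
      rwa [Matrix.GeneralLinearGroup.val_det_apply, Units.val_one] at this
    exact sl_mem hodd g hdet
end

section
/- Let H be a subgroup of GL₂(ℤ/8ℤ). Suppose that: (a) the image of H under the reduction map GL₂(ℤ/8ℤ) → GL₂(ℤ/4ℤ) contains every matrix in GL₂(ℤ/4ℤ) congruent to the identity mod 2; and (b) H contains an element g with g ≡ I (mod 4) and det g = 5 in ℤ/8ℤ. Then H contains every matrix in GL₂(ℤ/8ℤ) congruent to the identity mod 2. -/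
open Matrix

/-- Reduction `GL₂(ℤ/8ℤ) →* GL₂(ℤ/4ℤ)`. -/
def red84 : GL (Fin 2) (ZMod 8) →* GL (Fin 2) (ZMod 4) :=
  Matrix.GeneralLinearGroup.map (ZMod.castHom (by norm_num : (4 : ℕ) ∣ 8) (ZMod 4))

/-- Reduction `GL₂(ℤ/8ℤ) →* GL₂(ℤ/2ℤ)`. -/
def red82 : GL (Fin 2) (ZMod 8) →* GL (Fin 2) (ZMod 2) :=
  Matrix.GeneralLinearGroup.map (ZMod.castHom (by norm_num : (2 : ℕ) ∣ 8) (ZMod 2))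

/-- Reduction `GL₂(ℤ/4ℤ) →* GL₂(ℤ/2ℤ)`. -/
def red42 : GL (Fin 2) (ZMod 4) →* GL (Fin 2) (ZMod 2) :=
  Matrix.GeneralLinearGroup.map (ZMod.castHom (by norm_num : (2 : ℕ) ∣ 4) (ZMod 2))

namespace Stmt7Aux

abbrev c4 : ZMod 8 →+* ZMod 4 := ZMod.castHom (by norm_num : (4:ℕ) ∣ 8) (ZMod 4)

lemma fib1 : ∀ x : ZMod 8, c4 x = 1 → x = 1 ∨ x = 5 := by decide
lemma fib0 : ∀ x : ZMod 8, c4 x = 0 → x = 0 ∨ x = 4 := by decide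
lemma fib2 : ∀ x : ZMod 8, c4 x = 2 → x = 2 ∨ x = 6 := by decide
lemma fib3 : ∀ x : ZMod 8, c4 x = 3 → x = 3 ∨ x = 7 := by decide
lemma ccomp : ∀ z : ZMod 8,
    (ZMod.castHom (by norm_num : (2:ℕ) ∣ 4) (ZMod 2)) ((ZMod.castHom (by norm_num : (4:ℕ) ∣ 8) (ZMod 4)) z)
      = (ZMod.castHom (by norm_num : (2:ℕ) ∣ 8) (ZMod 2)) z := by decide

lemma offmul : ∀ x y : ZMod 8, (x = 0 ∨ x = 4) → (y = 0 ∨ y = 4) → x * y = 0 := by decide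
lemma diagmul : ∀ a d a' d' : ZMod 8,
    ((a=1∨a=5)∧(d=1∨d=5)∧(a'=1∨a'=5)∧(d'=1∨d'=5)∧a'*d' = 5) → (a = d ∨ a'*a = d'*d) := by
  decide

lemma ext84 (x : GL (Fin 2) (ZMod 8)) (B : GL (Fin 2) (ZMod 4)) (h : red84 x = B) (i j : Fin 2) :
    c4 (x.1 i j) = B.1 i j := by
  have h2 : (red84 x).1 i j = B.1 i j := by rw [h]
  exact h2

lemma mul00 (a b : Matrix (Fin 2) (Fin 2) (ZMod 8)) :
    (a*b) 0 0 = a 0 0 * b 0 0 + a 0 1 * b 1 0 := by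
  simp [Matrix.mul_apply, Fin.sum_univ_two]

lemma mul11 (a b : Matrix (Fin 2) (Fin 2) (ZMod 8)) :
    (a*b) 1 1 = a 1 0 * b 0 1 + a 1 1 * b 1 1 := by
  simp [Matrix.mul_apply, Fin.sum_univ_two]

def B1 : GL (Fin 2) (ZMod 4) := ⟨!![1,2;0,1], !![1,2;0,1], by decide, by decide⟩
def B2 : GL (Fin 2) (ZMod 4) := ⟨!![1,0;2,1], !![1,0;2,1], by decide, by decide⟩
def B3 : GL (Fin 2) (ZMod 4) := ⟨!![1,2;2,3], !![1,2;2,3], by decide, by decide⟩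

lemma redB1 : red42 B1 = 1 := by apply Units.ext; decide
lemma redB2 : red42 B2 = 1 := by apply Units.ext; decide
lemma redB3 : red42 B3 = 1 := by apply Units.ext; decide

lemma sq1 (h : GL (Fin 2) (ZMod 8)) (hr : red84 h = B1) : (h*h).1 = !![1,4;0,1] := by
  have e00 : c4 (h.1 0 0) = 1 := ext84 h B1 hr 0 0
  have e01 : c4 (h.1 0 1) = 2 := ext84 h B1 hr 0 1
  have e10 : c4 (h.1 1 0) = 0 := ext84 h B1 hr 1 0
  have e11 : c4 (h.1 1 1) = 1 := ext84 h B1 hr 1 1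
  show h.1 * h.1 = _
  rcases fib1 _ e00 with f00|f00 <;> rcases fib2 _ e01 with f01|f01 <;>
    rcases fib0 _ e10 with f10|f10 <;> rcases fib1 _ e11 with f11|f11 <;>
    rw [Matrix.eta_fin_two h.1, f00, f01, f10, f11] <;> decide

lemma sq2 (h : GL (Fin 2) (ZMod 8)) (hr : red84 h = B2) : (h*h).1 = !![1,0;4,1] := by
  have e00 : c4 (h.1 0 0) = 1 := ext84 h B2 hr 0 0
  have e01 : c4 (h.1 0 1) = 0 := ext84 h B2 hr 0 1
  have e10 : c4 (h.1 1 0) = 2 := ext84 h B2 hr 1 0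
  have e11 : c4 (h.1 1 1) = 1 := ext84 h B2 hr 1 1
  show h.1 * h.1 = _
  rcases fib1 _ e00 with f00|f00 <;> rcases fib0 _ e01 with f01|f01 <;>
    rcases fib2 _ e10 with f10|f10 <;> rcases fib1 _ e11 with f11|f11 <;>
    rw [Matrix.eta_fin_two h.1, f00, f01, f10, f11] <;> decide

lemma sq3 (h : GL (Fin 2) (ZMod 8)) (hr : red84 h = B3) : (h*h).1 = !![5,0;0,5] := by
  have e00 : c4 (h.1 0 0) = 1 := ext84 h B3 hr 0 0
  have e01 : c4 (h.1 0 1) = 2 := ext84 h B3 hr 0 1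
  have e10 : c4 (h.1 1 0) = 2 := ext84 h B3 hr 1 0
  have e11 : c4 (h.1 1 1) = 3 := ext84 h B3 hr 1 1
  show h.1 * h.1 = _
  rcases fib1 _ e00 with f00|f00 <;> rcases fib2 _ e01 with f01|f01 <;>
    rcases fib2 _ e10 with f10|f10 <;> rcases fib3 _ e11 with f11|f11 <;>
    rw [Matrix.eta_fin_two h.1, f00, f01, f10, f11] <;> decide

end Stmt7Aux

open Stmt7Aux in
/-- If a subgroup `H ≤ GL₂(ℤ/8ℤ)` reduces mod 4 onto everything congruent to the
identity mod 2, and contains an element `g ≡ I (mod 4)` with `det g = 5`, then `H`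
contains every matrix congruent to the identity mod 2. -/
theorem stmt7 (H : Subgroup (GL (Fin 2) (ZMod 8)))
    (ha : ∀ B : GL (Fin 2) (ZMod 4), red42 B = 1 → B ∈ H.map red84)
    (hb : ∃ g ∈ H, red84 g = 1 ∧ Matrix.det (g : Matrix (Fin 2) (Fin 2) (ZMod 8)) = 5) :
    ∀ A : GL (Fin 2) (ZMod 8), red82 A = 1 → A ∈ H := by
  obtain ⟨h1, h1H, h1r⟩ := Subgroup.mem_map.mp (ha B1 redB1)
  obtain ⟨h2, h2H, h2r⟩ := Subgroup.mem_map.mp (ha B2 redB2)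
  obtain ⟨h3, h3H, h3r⟩ := Subgroup.mem_map.mp (ha B3 redB3)
  have v1 := sq1 h1 h1r
  have v2 := sq2 h2 h2r
  have v3 := sq3 h3 h3r
  have m1 : h1*h1 ∈ H := mul_mem h1H h1H
  have m2 : h2*h2 ∈ H := mul_mem h2H h2H
  have m3 : h3*h3 ∈ H := mul_mem h3H h3H
  have m12 : (h1*h1)*(h2*h2) ∈ H := mul_mem m1 m2
  have m13 : (h1*h1)*(h3*h3) ∈ H := mul_mem m1 m3
  have m23 : (h2*h2)*(h3*h3) ∈ H := mul_mem m2 m3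
  have m123 : ((h1*h1)*(h2*h2))*(h3*h3) ∈ H := mul_mem m12 m3
  have v12 : ((h1*h1)*(h2*h2)).1 = !![1,4;4,1] := by
    show (h1*h1).1*(h2*h2).1 = _; rw [v1, v2]; decide
  have v13 : ((h1*h1)*(h3*h3)).1 = !![5,4;0,5] := by
    show (h1*h1).1*(h3*h3).1 = _; rw [v1, v3]; decide
  have v23 : ((h2*h2)*(h3*h3)).1 = !![5,0;4,5] := by
    show (h2*h2).1*(h3*h3).1 = _; rw [v2, v3]; decide
  have v123 : (((h1*h1)*(h2*h2))*(h3*h3)).1 = !![5,4;4,5] := by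
    show ((h1*h1)*(h2*h2)).1*(h3*h3).1 = _; rw [v12, v3]; decide
  -- span lemma
  have span8 : ∀ x : GL (Fin 2) (ZMod 8), red84 x = 1 → x.1 0 0 = x.1 1 1 → x ∈ H := by
    intro x hx hdiag
    have e00 : c4 (x.1 0 0) = 1 := ext84 x 1 hx 0 0
    have e01 : c4 (x.1 0 1) = 0 := ext84 x 1 hx 0 1
    have e10 : c4 (x.1 1 0) = 0 := ext84 x 1 hx 1 0
    have e11 : c4 (x.1 1 1) = 1 := ext84 x 1 hx 1 1
    rcases fib1 _ e00 with f00|f00 <;> rcases fib0 _ e01 with f01|f01 <;>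
      rcases fib0 _ e10 with f10|f10 <;> rcases fib1 _ e11 with f11|f11 <;>
      first
      | (have hx' : x = 1 := by
           apply Units.ext
           show x.1 = 1
           rw [Matrix.eta_fin_two x.1, f00, f01, f10, f11]; decide
         rw [hx']; exact one_mem H)
      | (have hx' : x = h1*h1 := by
           apply Units.ext
           rw [v1, Matrix.eta_fin_two x.1, f00, f01, f10, f11]
         rw [hx']; exact m1)
      | (have hx' : x = h2*h2 := by
           apply Units.ext
           rw [v2, Matrix.eta_fin_two x.1, f00, f01, f10, f11]
         rw [hx']; exact m2)
      | (have hx' : x = h3*h3 := by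
           apply Units.ext
           rw [v3, Matrix.eta_fin_two x.1, f00, f01, f10, f11]
         rw [hx']; exact m3)
      | (have hx' : x = (h1*h1)*(h2*h2) := by
           apply Units.ext
           rw [v12, Matrix.eta_fin_two x.1, f00, f01, f10, f11]
         rw [hx']; exact m12)
      | (have hx' : x = (h1*h1)*(h3*h3) := by
           apply Units.ext
           rw [v13, Matrix.eta_fin_two x.1, f00, f01, f10, f11]
         rw [hx']; exact m13)
      | (have hx' : x = (h2*h2)*(h3*h3) := by
           apply Units.ext
           rw [v23, Matrix.eta_fin_two x.1, f00, f01, f10, f11]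
         rw [hx']; exact m23)
      | (have hx' : x = ((h1*h1)*(h2*h2))*(h3*h3) := by
           apply Units.ext
           rw [v123, Matrix.eta_fin_two x.1, f00, f01, f10, f11]
         rw [hx']; exact m123)
      | (have hfalse : False := by
           rw [f00, f11] at hdiag
           exact absurd hdiag (by decide)
         exact hfalse.elim)
  -- kernel lemma
  obtain ⟨g, hgH, hg4, hgdet⟩ := hb
  have key : ∀ k : GL (Fin 2) (ZMod 8), red84 k = 1 → k ∈ H := by
    intro k hk
    have ka : c4 (k.1 0 0) = 1 := ext84 k 1 hk 0 0
    have kb : c4 (k.1 0 1) = 0 := ext84 k 1 hk 0 1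
    have kc : c4 (k.1 1 0) = 0 := ext84 k 1 hk 1 0
    have kd : c4 (k.1 1 1) = 1 := ext84 k 1 hk 1 1
    have ga : c4 (g.1 0 0) = 1 := ext84 g 1 hg4 0 0
    have gb : c4 (g.1 0 1) = 0 := ext84 g 1 hg4 0 1
    have gc : c4 (g.1 1 0) = 0 := ext84 g 1 hg4 1 0
    have gd : c4 (g.1 1 1) = 1 := ext84 g 1 hg4 1 1
    have goff : g.1 0 1 * g.1 1 0 = 0 := offmul _ _ (fib0 _ gb) (fib0 _ gc)
    rw [Matrix.det_fin_two, goff, sub_zero] at hgdet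
    rcases diagmul (k.1 0 0) (k.1 1 1) (g.1 0 0) (g.1 1 1)
        ⟨fib1 _ ka, fib1 _ kd, fib1 _ ga, fib1 _ gd, hgdet⟩ with hd | hd
    · exact span8 k hk hd
    · have hgk : g*k ∈ H := by
        apply span8 (g*k) (by rw [_root_.map_mul, hg4, hk, one_mul])
        show (g.1*k.1) 0 0 = (g.1*k.1) 1 1
        rw [mul00, mul11, offmul _ _ (fib0 _ gb) (fib0 _ kc),
          offmul _ _ (fib0 _ gc) (fib0 _ kb), add_zero, zero_add]
        exact hd
      have hk' : k = g⁻¹ * (g * k) := by group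
      rw [hk']
      exact mul_mem (inv_mem hgH) hgk
  intro A hA
  have hB : red42 (red84 A) = 1 := by
    rw [← hA]
    apply Units.ext
    ext i j
    exact ccomp (A.1 i j)
  obtain ⟨h, hH, hr⟩ := Subgroup.mem_map.mp (ha (red84 A) hB)
  have hker : red84 (h⁻¹ * A) = 1 := by
    rw [_root_.map_mul, _root_.map_inv, hr]
    simp
  have hA' : A = h * (h⁻¹ * A) := by group
  rw [hA']
  exact mul_mem hH (key _ hker)
end

section
/- Let k be a field, G a group, and V a module over the group algebra k[G] which is 2-dimensional as a k-vector space. Let W and W' be k[G]-submodules of V each of which is 1-dimensional as a k-vector space. Then the k[G]-modules W ⊕ (V/W) and W' ⊕ (V/W') are isomorphic. -/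
/-- If `V` is a `k[G]`-module that is 2-dimensional over the field `k`, and `W`, `W'`
are 1-dimensional `k[G]`-submodules, then `W ⊕ V/W ≅ W' ⊕ V/W'` as `k[G]`-modules. -/
theorem stmt8 (k : Type*) [Field k] (G : Type*) [Group G]
    (V : Type*) [AddCommGroup V] [Module (MonoidAlgebra k G) V]
    [Module k V] [IsScalarTower k (MonoidAlgebra k G) V]
    (hV : Module.finrank k V = 2)
    (W W' : Submodule (MonoidAlgebra k G) V)
    (hW : Module.finrank k W = 1) (hW' : Module.finrank k W' = 1) :
    Nonempty ((W × (V ⧸ W)) ≃ₗ[MonoidAlgebra k G] (W' × (V ⧸ W'))) := by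
  by_cases h : W = W'
  · subst h; exact ⟨LinearEquiv.refl _ _⟩
  -- work over k
  have hfd : FiniteDimensional k V := FiniteDimensional.of_finrank_eq_succ hV
  set Wk := W.restrictScalars k with hWk
  set W'k := W'.restrictScalars k with hW'k
  have hWkr : Module.finrank k Wk = 1 := hW
  have hW'kr : Module.finrank k W'k = 1 := hW'
  have hinf : Wk ⊓ W'k = ⊥ := by
    by_contra hne
    have h0 : Module.finrank k ↥(Wk ⊓ W'k) ≠ 0 := by
      intro h0
      exact hne (Submodule.finrank_eq_zero.mp h0)
    have hle : Module.finrank k ↥(Wk ⊓ W'k) ≤ 1 := by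
      have := Submodule.finrank_mono (inf_le_left (a := Wk) (b := W'k))
      omega
    have h1 : Module.finrank k ↥(Wk ⊓ W'k) = 1 := by omega
    have e1 : Wk ⊓ W'k = Wk :=
      Submodule.eq_of_le_of_finrank_eq inf_le_left (by rw [h1, hWkr])
    have e2 : Wk ⊓ W'k = W'k :=
      Submodule.eq_of_le_of_finrank_eq inf_le_right (by rw [h1, hW'kr])
    exact h (Submodule.restrictScalars_injective k _ _ (e1.symm.trans e2))
  have hsup : Wk ⊔ W'k = ⊤ := by
    apply Submodule.eq_top_of_finrank_eq
    have := Submodule.finrank_sup_add_finrank_inf_eq Wk W'k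
    rw [hinf] at this
    simp [finrank_bot] at this
    omega
  have hdisj : Disjoint W W' := by
    rw [disjoint_iff, eq_bot_iff]
    intro x hx
    have : x ∈ Wk ⊓ W'k := hx
    rw [hinf] at this
    exact this
  have hcodisj : Codisjoint W W' := by
    rw [codisjoint_iff, eq_top_iff]
    intro x _
    have hx : x ∈ Wk ⊔ W'k := by rw [hsup]; trivial
    obtain ⟨a, ha, b, hb, rfl⟩ := Submodule.mem_sup.mp hx
    exact Submodule.add_mem _ (Submodule.mem_sup_left ha) (Submodule.mem_sup_right hb)
  have hc : IsCompl W W' := ⟨hdisj, hcodisj⟩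
  exact ⟨LinearEquiv.prodCongr (LinearEquiv.refl (MonoidAlgebra k G) W)
      (Submodule.quotientEquivOfIsCompl W W' hc) ≪≫ₗ
    LinearEquiv.prodComm _ _ _ ≪≫ₗ
    LinearEquiv.prodCongr (LinearEquiv.refl (MonoidAlgebra k G) W')
      (Submodule.quotientEquivOfIsCompl W' W hc.symm).symm⟩
end

section
/- Let K be a number field, realized as a subfield of the complex numbers, such that for every integer n ≥ 1 the intersection K ∩ ℚ(μ_n) equals ℚ, where ℚ(μ_n) is the n-th cyclotomic field. Let d ∈ K, and suppose that for some n ≥ 1 there exists x ∈ K(μ_n) (the compositum of K and ℚ(μ_n)) with x² = d. Then there exist an integer m and an element s ∈ K such that d = m·s². -/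
open IntermediateField

/-- The `n`-th cyclotomic field `ℚ(μ_n)` inside `ℂ`. -/
noncomputable def cycField (n : ℕ) : IntermediateField ℚ ℂ :=
  IntermediateField.adjoin ℚ {x : ℂ | x ^ n = 1}

open Polynomial

set_option maxHeartbeats 1000000
set_option synthInstance.maxHeartbeats 400000
set_option linter.unnecessarySimpa false

private lemma aux_resolvent {M L ι : Type*} [Monoid M] [Field L] [Fintype ι]
    (f : ι → (M →* L)) (hf : Function.Injective f)
    (c : ι → L) (i0 : ι) (hc : c i0 ≠ 0) :
    ∃ a : M, (∑ i : ι, c i * f i a) ≠ 0 := by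
  by_contra hcon
  push_neg at hcon
  have hli : LinearIndependent L (fun i : ι => ((f i : M →* L) : M → L)) :=
    (linearIndependent_monoidHom M L).comp f hf
  have hzero : (∑ i : ι, c i • ((f i : M →* L) : M → L)) = 0 := by
    funext a
    rw [Finset.sum_apply, Pi.zero_apply]
    simpa using hcon a
  exact hc (Fintype.linearIndependent_iff.mp hli c hzero i0)

/-- If `K` is a number field inside `ℂ` with `K ∩ ℚ(μ_n) = ℚ` for all `n ≥ 1`,
`d ∈ K`, and `d` has a square root in some `K(μ_n)`, then `d = m·s²` for some
integer `m` and some `s ∈ K`. -/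
theorem stmt9 (K : IntermediateField ℚ ℂ) [FiniteDimensional ℚ K]
    (hK : ∀ n : ℕ, 1 ≤ n → K ⊓ cycField n = ⊥)
    (d : ℂ) (hd : d ∈ K)
    (hsq : ∃ n : ℕ, 1 ≤ n ∧ ∃ x ∈ K ⊔ cycField n, x ^ 2 = d) :
    ∃ (m : ℤ) (s : ℂ), s ∈ K ∧ d = (m : ℂ) * s ^ 2 := by
  obtain ⟨n, hn, x, hxmem, hx2⟩ := hsq
  by_cases hx0 : x = 0
  · exact ⟨0, 0, K.zero_mem, by simp [← hx2, hx0]⟩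
  set S : Set ℂ := {z : ℂ | z ^ n = 1} with hS
  set E : IntermediateField K ℂ := IntermediateField.adjoin K S with hEdef
  have hEeq : E.restrictScalars ℚ = K ⊔ cycField n := restrictScalars_adjoin_eq_sup (F := ℚ) K S
  have hxE : x ∈ E := by rw [← hEeq] at hxmem; exact hxmem
  set p : Polynomial K := X ^ n - 1 with hpdef
  have hp0 : p ≠ 0 := by
    have := Polynomial.X_pow_sub_C_ne_zero (Nat.lt_of_lt_of_le Nat.zero_lt_one hn) (1 : K)
    simpa [hpdef] using this
  have hproots : p.rootSet ℂ = S := by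
    ext z
    simp only [hS, Set.mem_setOf_eq, hpdef, Polynomial.mem_rootSet, hp0, ne_eq, not_false_iff,
      true_and, map_sub, map_pow, map_one, aeval_X, sub_eq_zero]
    exact and_iff_right (fun h => hp0 (sub_eq_zero.mpr h))
  have hsplit : IsSplittingField K E p := by
    rw [hEdef, ← hproots]
    exact adjoin_rootSet_isSplittingField (IsAlgClosed.splits _)
  haveI : IsSplittingField K E p := hsplit
  haveI : FiniteDimensional K E := IsSplittingField.finiteDimensional E p
  have hn0 : ((n : ℕ) : (K : IntermediateField ℚ ℂ)) ≠ 0 := by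
    exact_mod_cast (Nat.one_le_iff_ne_zero.mp hn)
  have hpsep : p.Separable := Polynomial.X_pow_sub_one_separable_iff.2 hn0
  haveI : IsGalois K E := IsGalois.of_separable_splitting_field hpsep
  -- lift x
  set X : E := ⟨x, hxE⟩ with hXdef
  have hX0 : X ≠ 0 := by
    intro h
    exact hx0 (by simpa [hXdef] using congrArg Subtype.val h)
  -- X^2 is fixed by the Galois group
  have hfix2 : ∀ σ : E ≃ₐ[K] E, σ (X ^ 2) = X ^ 2 := by
    intro σ
    have hX2K : X ^ 2 = algebraMap K E ⟨d, hd⟩ := by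
      apply Subtype.ext
      have : ((X ^ 2 : E) : ℂ) = x ^ 2 := by push_cast [hXdef]; ring
      rw [this, hx2]; rfl
    rw [hX2K, AlgEquiv.commutes]
  have hXne : ¬ (-X = X) := by
    intro h
    apply hX0
    have h2 : (-x : ℂ) = x := congrArg Subtype.val h
    have : (x : ℂ) = 0 := by linear_combination (-1/2 : ℂ) * h2
    exact Subtype.ext this
  have hsign : ∀ σ : E ≃ₐ[K] E, σ X = X ∨ σ X = -X := by
    intro σ
    have h : σ X * σ X = X * X := by rw [← map_mul, ← sq, hfix2 σ, sq]
    exact mul_self_eq_mul_self_iff.mp h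
  -- the sign character
  classical
  set ε : (E ≃ₐ[K] E) → E := fun σ => if σ X = X then 1 else -1 with hεdef
  have hεval : ∀ σ, ε σ = 1 ∨ ε σ = -1 := by
    intro σ; by_cases h : σ X = X <;> simp [hεdef, h]
  have hεeig : ∀ σ, σ X = ε σ * X := by
    intro σ
    by_cases h : σ X = X
    · simp [hεdef, h]
    · rcases hsign σ with h' | h'
      · exact absurd h' h
      · simp [hεdef, h, h', hXne]
  have hεsq : ∀ σ, ε σ * ε σ = 1 := by
    intro σ; rcases hεval σ with h | h <;> rw [h] <;> ring
  -- roots of unity inside E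
  set R : Set E := {z : E | z ^ n = 1} with hR
  set QE : IntermediateField ℚ E := IntermediateField.adjoin ℚ R with hQdef
  -- Galois action preserves QE
  have hQinv : ∀ (σ : E ≃ₐ[K] E), ∀ z ∈ QE, σ z ∈ QE := by
    intro σ z hz
    have hmap : QE.map ((σ.toAlgHom).restrictScalars ℚ) ≤ QE := by
      rw [hQdef, adjoin_map]
      apply IntermediateField.adjoin.mono
      rintro w ⟨u, hu, rfl⟩
      show σ u ^ n = 1
      rw [← map_pow, hu, map_one]
    exact hmap ⟨z, hz, rfl⟩
  -- elements of QE lie in the cyclotomic field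
  have hQcyc : ∀ z : E, z ∈ QE → (z : ℂ) ∈ cycField n := by
    intro z hz
    have hmap : QE.map ((E.val).restrictScalars ℚ) ≤ cycField n := by
      rw [hQdef, adjoin_map]
      apply IntermediateField.adjoin.mono
      rintro w ⟨u, hu, rfl⟩
      show ((u : E) : ℂ) ^ n = 1
      have hu' : (u : E) ^ n = 1 := hu
      have := congrArg (Subtype.val) hu'
      push_cast at this
      exact this
    exact hmap ⟨z, hz, rfl⟩
  -- ε is multiplicative
  have hεfixed : ∀ (σ τ : E ≃ₐ[K] E), σ (ε τ) = ε τ := by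
    intro σ τ
    rcases hεval τ with h | h <;> rw [h] <;> simp
  have hεmul : ∀ σ τ, ε (σ * τ) = ε σ * ε τ := by
    intro σ τ
    have h1 : (σ * τ) X = (ε σ * ε τ) * X := by
      rw [AlgEquiv.mul_apply, hεeig τ, map_mul, hεfixed σ τ, hεeig σ]
      ring
    have h2 : (σ * τ) X = ε (σ * τ) * X := hεeig (σ * τ)
    have := h1.symm.trans h2
    exact (mul_right_cancel₀ hX0 this).symm
  -- roots generate E over K
  have hRalg : Algebra.adjoin K R = (⊤ : Subalgebra K E) := by
    have h1 : p.rootSet E = R := by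
      ext z
      simp only [hR, Set.mem_setOf_eq, hpdef, Polynomial.mem_rootSet, hp0, ne_eq,
        not_false_iff, true_and, map_sub, map_pow, map_one, aeval_X, sub_eq_zero]
      exact and_iff_right (fun h => hp0 (sub_eq_zero.mpr h))
    rw [← h1]
    exact IsSplittingField.adjoin_rootSet E p
  -- the restriction maps to QE, as monoid homs
  set F : (E ≃ₐ[K] E) → (QE →* E) := fun σ =>
    (σ.toAlgHom.toRingHom.toMonoidHom).comp (QE.val.toRingHom.toMonoidHom) with hFdef
  have hFinj : Function.Injective F := by
    intro σ τ h
    refine AlgEquiv.ext fun z => (AlgHom.mem_equalizer σ.toAlgHom τ.toAlgHom z).mp ?_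
    have htop : AlgHom.equalizer σ.toAlgHom τ.toAlgHom = ⊤ := by
      rw [eq_top_iff, ← hRalg, Algebra.adjoin_le_iff]
      intro r hr
      have := DFunLike.congr_fun h (⟨r, subset_adjoin ℚ R hr⟩ : QE)
      exact this
    rw [htop]; trivial
  haveI : Fintype (E ≃ₐ[K] E) := AlgEquiv.fintype K E
  -- Dedekind: the resolvent is nonzero for some a
  have hε1 : ε 1 ≠ 0 := by
    rcases hεval 1 with h | h <;> rw [h] <;> intro hcc <;> simpa using hcc
  have hexists : ∃ a : QE, (∑ σ : E ≃ₐ[K] E, ε σ * (σ (a : E))) ≠ 0 := by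
    obtain ⟨a, ha⟩ := aux_resolvent F hFinj ε 1 hε1
    exact ⟨a, ha⟩
  obtain ⟨a, hane⟩ := hexists
  set y : E := ∑ σ : E ≃ₐ[K] E, ε σ * (σ (a : E)) with hydef
  have hy0 : y ≠ 0 := hane
  have hεQE : ∀ σ, ε σ ∈ QE := by
    intro σ
    rcases hεval σ with h | h <;> rw [h]
    · exact one_mem QE
    · exact neg_mem (one_mem QE)
  have hyQE : y ∈ QE := by
    rw [hydef]
    exact sum_mem (fun σ _ => mul_mem (hεQE σ) (hQinv σ a a.2))
  have hyeig : ∀ τ : E ≃ₐ[K] E, τ y = ε τ * y := by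
    intro τ
    have h1 : τ y = ∑ σ : E ≃ₐ[K] E, ε σ * ((τ * σ) (a : E)) := by
      rw [hydef, map_sum]
      refine Finset.sum_congr rfl fun σ _ => ?_
      rw [map_mul, hεfixed τ σ]
      rfl
    have h2 : ∀ σ : E ≃ₐ[K] E, ε σ * ((τ * σ) (a : E))
        = ε τ * (ε (τ * σ) * ((τ * σ) (a : E))) := by
      intro σ
      have h3 : ε τ * ε (τ * σ) = ε σ := by
        rw [hεmul, ← mul_assoc, hεsq τ, one_mul]
      rw [← h3]; ring
    rw [h1, Finset.sum_congr rfl (fun σ _ => h2 σ), ← Finset.mul_sum]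
    congr 1
    rw [hydef]
    exact Fintype.sum_equiv (Equiv.mulLeft τ) _ _ (fun σ => rfl)
  set z : E := X * y with hzdef
  have hzfix : ∀ τ : E ≃ₐ[K] E, τ z = z := by
    intro τ
    rw [hzdef, map_mul, hεeig τ, hyeig τ]
    have h4 : (ε τ * X) * (ε τ * y) = (ε τ * ε τ) * (X * y) := by ring
    rw [h4, hεsq τ, one_mul]
  have hyyfix : ∀ τ : E ≃ₐ[K] E, τ (y * y) = y * y := by
    intro τ
    rw [map_mul, hyeig τ]
    have h4 : (ε τ * y) * (ε τ * y) = (ε τ * ε τ) * (y * y) := by ring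
    rw [h4, hεsq τ, one_mul]
  have hbot : IntermediateField.fixedField (⊤ : Subgroup (E ≃ₐ[K] E)) = ⊥ :=
    ((IsGalois.tfae (F := K) (E := E)).out 0 1).mp (inferInstance : IsGalois K E)
  have hmem : ∀ w : E, (∀ τ : E ≃ₐ[K] E, τ w = w) → ∃ k : K, algebraMap K E k = w := by
    intro w hw
    have hwf : w ∈ IntermediateField.fixedField (⊤ : Subgroup (E ≃ₐ[K] E)) := by
      rintro ⟨g, -⟩
      exact hw g
    rw [hbot, IntermediateField.mem_bot] at hwf
    exact hwf
  obtain ⟨k, hk⟩ := hmem z hzfix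
  obtain ⟨q0, hq0⟩ := hmem (y * y) hyyfix
  have hcoe : ∀ k' : K, ((algebraMap K E k' : E) : ℂ) = (k' : ℂ) := fun _ => rfl
  have hyyK : ((y * y : E) : ℂ) ∈ K := by
    rw [← hq0, hcoe q0]; exact q0.2
  have hyycyc : ((y * y : E) : ℂ) ∈ cycField n := hQcyc _ (mul_mem hyQE hyQE)
  have hyybot : ((y * y : E) : ℂ) ∈ (⊥ : IntermediateField ℚ ℂ) := by
    rw [← hK n hn]
    exact ⟨hyyK, hyycyc⟩
  rw [IntermediateField.mem_bot] at hyybot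
  obtain ⟨q, hq⟩ := hyybot
  -- final computation in ℂ
  have hyc0 : ((y : E) : ℂ) ≠ 0 := fun h => hy0 (Subtype.ext h)
  have hqc : (q : ℂ) = ((y : E) : ℂ) * ((y : E) : ℂ) := by
    rw [← eq_ratCast (algebraMap ℚ ℂ) q, hq]
    push_cast
    rfl
  have hq0' : (q : ℂ) ≠ 0 := by
    rw [hqc]
    exact mul_ne_zero hyc0 hyc0
  have hzK : ((z : E) : ℂ) ∈ K := by rw [← hk, hcoe k]; exact k.2
  have hzx : ((z : E) : ℂ) = x * ((y : E) : ℂ) := rfl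
  have hq0'' : q ≠ 0 := by
    intro h
    rw [h] at hq0'
    simp at hq0'
  have hnum : ((q.num : ℤ) : ℂ) ≠ 0 := by
    exact_mod_cast Rat.num_ne_zero.mpr hq0''
  have hden : ((q.den : ℕ) : ℂ) ≠ 0 := by
    exact_mod_cast q.den_nz
  refine ⟨(q.den : ℤ) * q.num, ((z : E) : ℂ) / (q.num : ℂ), ?_, ?_⟩
  · exact div_mem hzK (intCast_mem K q.num)
  · have hnd : ((q.num : ℂ)) = (q : ℂ) * (q.den : ℂ) := by
      rw [Rat.cast_def]
      field_simp
    rw [← hx2]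
    push_cast
    field_simp
    linear_combination (x^2) * hnd + (x^2*((q.den:ℕ):ℂ)) * hqc - (((q.den:ℕ):ℂ)*(((z:E):ℂ) + x*((y:E):ℂ))) * hzx
end

section
/- Let ℓ be a prime and let A be a 2×2 matrix over ℤ_ℓ whose characteristic polynomial, reduced mod ℓ, has two distinct roots in 𝔽_ℓ = ℤ/ℓℤ. Then A is diagonalizable over ℤ_ℓ: there exist P ∈ GL₂(ℤ_ℓ) and λ₁, λ₂ ∈ ℤ_ℓ such that P·A·P⁻¹ is the diagonal matrix with diagonal entries λ₁ and λ₂. -/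
open Matrix Polynomial

section aux

variable {p : ℕ} [Fact p.Prime]

lemma unit_of_toZMod {x : ℤ_[p]} (h : PadicInt.toZMod x ≠ 0) : IsUnit x := by
  by_contra hx
  apply h
  rw [← RingHom.mem_ker, PadicInt.ker_toZMod]
  exact PadicInt.mem_nonunits.mpr (PadicInt.not_isUnit_iff.mp hx)

lemma toZMod_eq_zero_of_norm_lt {x : ℤ_[p]} (h : ‖x‖ < 1) : PadicInt.toZMod x = 0 := by
  rw [← RingHom.mem_ker, PadicInt.ker_toZMod]
  exact PadicInt.mem_nonunits.mpr h

lemma norm_lt_one_of_toZMod_eq_zero {x : ℤ_[p]} (h : PadicInt.toZMod x = 0) : ‖x‖ < 1 := by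
  rw [← RingHom.mem_ker, PadicInt.ker_toZMod] at h
  exact PadicInt.mem_nonunits.mp h

lemma lift_root (t D : ℤ_[p]) (r : ZMod p)
    (hroot : r ^ 2 - PadicInt.toZMod t * r + PadicInt.toZMod D = 0)
    (hder : 2 * r - PadicInt.toZMod t ≠ 0) :
    ∃ z : ℤ_[p], z ^ 2 - t * z + D = 0 ∧ PadicInt.toZMod z = r := by
  set F : Polynomial ℤ_[p] := X ^ 2 - C t * X + C D with hF
  set a : ℤ_[p] := ((r.val : ℕ) : ℤ_[p]) with haa
  have ha : PadicInt.toZMod a = r := by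
    rw [haa, map_natCast, ZMod.natCast_val, ZMod.cast_id]
  have hFa : F.eval a = a ^ 2 - t * a + D := by simp [hF]
  have hda : F.derivative.eval a = 2 * a - t := by
    simp [hF, Polynomial.derivative_X_pow]
    norm_num
  have h1 : ‖F.eval a‖ < 1 := by
    apply norm_lt_one_of_toZMod_eq_zero
    rw [hFa]
    rw [map_add, map_sub, map_pow, _root_.map_mul, ha]
    linear_combination hroot
  have h2 : ‖F.derivative.eval a‖ = 1 := by
    apply PadicInt.isUnit_iff.mp
    apply unit_of_toZMod
    rw [hda]
    intro h
    apply hder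
    rw [map_sub, _root_.map_mul, ha, map_ofNat] at h
    exact h
  have hnorm : ‖F.eval a‖ < ‖F.derivative.eval a‖ ^ 2 := by
    rw [h2]; simpa using h1
  obtain ⟨z, hz, hdist, -, -⟩ := hensels_lemma hnorm
  refine ⟨z, by simpa [hF] using hz, ?_⟩
  have hz0 : PadicInt.toZMod (z - a) = 0 := by
    apply toZMod_eq_zero_of_norm_lt
    rw [Polynomial.coe_aeval_eq_eval, h2] at hdist
    exact hdist
  rw [map_sub] at hz0
  exact (sub_eq_zero.mp hz0).trans ha

lemma conj_lemma (A M : Matrix (Fin 2) (Fin 2) ℤ_[p]) (lam₁ lam₂ : ℤ_[p])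
    (hM : IsUnit M.det) (h : A * M = M * Matrix.diagonal ![lam₁, lam₂]) :
    ∃ (P : GL (Fin 2) ℤ_[p]),
      (P : Matrix (Fin 2) (Fin 2) ℤ_[p]) * A * ((P⁻¹ : GL (Fin 2) ℤ_[p]) :
        Matrix (Fin 2) (Fin 2) ℤ_[p]) = Matrix.diagonal ![lam₁, lam₂] := by
  have hMu : IsUnit M := (Matrix.isUnit_iff_isUnit_det M).mpr hM
  refine ⟨hMu.unit⁻¹, ?_⟩
  rw [inv_inv]
  rw [Matrix.coe_units_inv, hMu.unit_spec, Matrix.mul_assoc, h, ← Matrix.mul_assoc,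
    Matrix.nonsing_inv_mul M hM, Matrix.one_mul]

end aux

/-- A 2×2 matrix over `ℤ_ℓ` whose characteristic polynomial has two distinct roots
mod `ℓ` is diagonalizable over `ℤ_ℓ`. -/
theorem stmt13 (p : ℕ) [Fact p.Prime] (A : Matrix (Fin 2) (Fin 2) ℤ_[p])
    (hroots : ∃ r₁ r₂ : ZMod p, r₁ ≠ r₂ ∧
      r₁ ^ 2 - PadicInt.toZMod (Matrix.trace A) * r₁ + PadicInt.toZMod A.det = 0 ∧
      r₂ ^ 2 - PadicInt.toZMod (Matrix.trace A) * r₂ + PadicInt.toZMod A.det = 0) :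
    ∃ (P : GL (Fin 2) ℤ_[p]) (lam₁ lam₂ : ℤ_[p]),
      (P : Matrix (Fin 2) (Fin 2) ℤ_[p]) * A * ((P⁻¹ : GL (Fin 2) ℤ_[p]) :
        Matrix (Fin 2) (Fin 2) ℤ_[p]) = Matrix.diagonal ![lam₁, lam₂] := by
  obtain ⟨r₁, r₂, hne, h1, h2⟩ := hroots
  set t : ℤ_[p] := Matrix.trace A with ht
  set D : ℤ_[p] := A.det with hD
  have hrne : r₁ - r₂ ≠ 0 := sub_ne_zero.mpr hne
  have hsum' : PadicInt.toZMod t = r₁ + r₂ := by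
    have h3 : (r₁ - r₂) * (r₁ + r₂ - PadicInt.toZMod t) = 0 := by linear_combination h1 - h2
    rcases mul_eq_zero.mp h3 with h | h
    · exact absurd h hrne
    · exact (sub_eq_zero.mp h).symm
  obtain ⟨lam₁, hl1, hm1⟩ := lift_root t D r₁ h1 (by
    rw [hsum']; intro h; apply hrne; linear_combination h)
  obtain ⟨lam₂, hl2, hm2⟩ := lift_root t D r₂ h2 (by
    rw [hsum']; intro h; apply hrne; linear_combination -h)
  have hu : IsUnit (lam₁ - lam₂) := by
    apply unit_of_toZMod
    rw [map_sub, hm1, hm2]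
    exact hrne
  have hsum : lam₁ + lam₂ = t := by
    have h3 : (lam₁ - lam₂) * (lam₁ + lam₂ - t) = 0 := by linear_combination hl1 - hl2
    rcases mul_eq_zero.mp h3 with h | h
    · exact absurd h hu.ne_zero
    · linear_combination h
  set a : ℤ_[p] := A 0 0 with ha'
  set b : ℤ_[p] := A 0 1 with hb'
  set c : ℤ_[p] := A 1 0 with hc'
  set d : ℤ_[p] := A 1 1 with hd'
  have hA : A = !![a, b; c, d] := by
    ext i j; fin_cases i <;> fin_cases j <;> rfl
  have htr : t = a + d := by rw [ht, Matrix.trace_fin_two]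
  have hDet : D = a * d - b * c := by rw [hD, Matrix.det_fin_two]
  have hdet2 : (a - lam₂) * (d - lam₂) = b * c := by
    linear_combination hl2 + lam₂ * htr - hDet
  have hsum2 : lam₁ + lam₂ = a + d := by rw [hsum, htr]
  have hdiag : IsUnit (a - lam₂) ∨ IsUnit (d - lam₂) := by
    by_contra hcon
    push_neg at hcon
    obtain ⟨hx, hy⟩ := hcon
    have hx0 : PadicInt.toZMod (a - lam₂) = 0 := by
      by_contra h; exact hx (unit_of_toZMod h)
    have hy0 : PadicInt.toZMod (d - lam₂) = 0 := by
      by_contra h; exact hy (unit_of_toZMod h)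
    have h6 : PadicInt.toZMod ((a - lam₂) + (d - lam₂)) = r₁ - r₂ := by
      have h4 : (a - lam₂) + (d - lam₂) = t - 2 * lam₂ := by rw [htr]; ring
      rw [h4, map_sub, _root_.map_mul, hsum', hm2, map_ofNat]
      ring
    apply hrne
    rw [← h6, map_add, hx0, hy0, add_zero]
  rcases hdiag with hα | hα
  · set M : Matrix (Fin 2) (Fin 2) ℤ_[p] :=
      !![a - lam₂, -(b * (a - lam₂)); c, (lam₁ - lam₂) * (a - lam₂) - b * c] with hM
    have hMu : IsUnit M.det := by
      have : M.det = (lam₁ - lam₂) * (a - lam₂) ^ 2 := by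
        rw [hM, Matrix.det_fin_two_of]; ring
      rw [this]
      exact hu.mul (hα.pow 2)
    have heq : A * M = M * Matrix.diagonal ![lam₁, lam₂] := by
      rw [hA, hM]
      ext i j
      fin_cases i <;> fin_cases j <;>
        simp [Matrix.mul_apply, Fin.sum_univ_two, Matrix.diagonal_apply]
      · linear_combination (-(a - lam₂)) * hsum2 - hdet2
      · linear_combination b * (a - lam₂) * hsum2 + b * hdet2
      · linear_combination (-c) * hsum2
      · linear_combination (a - lam₂) * (d - lam₂) * hsum2 + (a - lam₂ + d - lam₂) * hdet2
    obtain ⟨P, hP⟩ := conj_lemma A M lam₁ lam₂ hMu heq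
    exact ⟨P, lam₁, lam₂, hP⟩
  · set M : Matrix (Fin 2) (Fin 2) ℤ_[p] :=
      !![b, (lam₁ - lam₂) * (d - lam₂) - c * b; d - lam₂, -(c * (d - lam₂))] with hM
    have hMu : IsUnit M.det := by
      have : M.det = -((lam₁ - lam₂) * (d - lam₂) ^ 2) := by
        rw [hM, Matrix.det_fin_two_of]; ring
      rw [this]
      exact (hu.mul (hα.pow 2)).neg
    have heq : A * M = M * Matrix.diagonal ![lam₁, lam₂] := by
      rw [hA, hM]
      ext i j
      fin_cases i <;> fin_cases j <;>
        simp [Matrix.mul_apply, Fin.sum_univ_two, Matrix.diagonal_apply]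
      · linear_combination (-b) * hsum2
      · linear_combination (d - lam₂) * (a - lam₂) * hsum2 + (d - lam₂ + a - lam₂) * hdet2
      · linear_combination (-(d - lam₂)) * hsum2 - hdet2
      · linear_combination c * (d - lam₂) * hsum2 + c * hdet2
    obtain ⟨P, hP⟩ := conj_lemma A M lam₁ lam₂ hMu heq
    exact ⟨P, lam₁, lam₂, hP⟩
end

section
/- Let R = ℤ[α] = ℤ[X]/(X³ + X + 1), where α denotes the image of X (a root of x³ + x + 1). Let b, c be integers such that 1 + b + c is not divisible by 3. Then the elements A = α² + bα + c and B = 16·(1 + α + α²) are coprime in R; that is, there exist u, v ∈ R with u·A + v·B = 1. -/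
open Polynomial

/-- In `R = ℤ[α] = ℤ[X]/(X³ + X + 1)`, if `3 ∤ 1 + b + c` then
`α² + bα + c` and `16(1 + α + α²)` are coprime. -/
theorem stmt15 (b c : ℤ) (h : ¬ (3 ∣ 1 + b + c)) :
    IsCoprime
      ((AdjoinRoot.root (X ^ 3 + X + 1 : ℤ[X])) ^ 2 +
        (b : AdjoinRoot (X ^ 3 + X + 1 : ℤ[X])) * AdjoinRoot.root (X ^ 3 + X + 1 : ℤ[X]) +
        (c : AdjoinRoot (X ^ 3 + X + 1 : ℤ[X])))
      (16 * (1 + AdjoinRoot.root (X ^ 3 + X + 1 : ℤ[X]) +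
        (AdjoinRoot.root (X ^ 3 + X + 1 : ℤ[X])) ^ 2)) := by
  set R := AdjoinRoot (X ^ 3 + X + 1 : ℤ[X]) with hR
  set r : R := AdjoinRoot.root (X ^ 3 + X + 1 : ℤ[X]) with hr
  have h3 : r ^ 3 + r + 1 = 0 := by
    have := AdjoinRoot.mk_self (f := (X ^ 3 + X + 1 : ℤ[X]))
    simpa [map_add, map_pow, map_one] using this
  set A : R := r ^ 2 + (b : R) * r + (c : R) with hA
  set β : R := 1 + r + r ^ 2 with hβ
  have key : IsCoprime A (16 * β) := by
    apply IsCoprime.mul_right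
    · -- coprime with 16, via the norm which is odd
      have hN : Odd (-b^3 + b^2*c + 3*b*c - b + c^3 - 2*c^2 + c + 1) := by
        rcases Int.even_or_odd b with ⟨k, hk⟩ | ⟨k, hk⟩ <;>
          rcases Int.even_or_odd c with ⟨l, hl⟩ | ⟨l, hl⟩ <;> subst hk <;> subst hl
        · exact ⟨l - 4*l^2 + 4*l^3 - k + 6*k*l + 4*k^2*l - 4*k^3, by ring⟩
        · exact ⟨2*l^2 + 4*l^3 + 2*k + 6*k*l + 2*k^2 + 4*k^2*l - 4*k^3, by ring⟩
        · exact ⟨-1 + 5*l - 4*l^2 + 4*l^3 - 4*k + 10*k*l - 6*k^2 + 4*k^2*l - 4*k^3, by ring⟩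
        · exact ⟨1 + 4*l + 2*l^2 + 4*l^3 + k + 10*k*l - 4*k^2 + 4*k^2*l - 4*k^3, by ring⟩
      obtain ⟨m, hm⟩ := hN
      have h2 : IsCoprime (-b^3 + b^2*c + 3*b*c - b + c^3 - 2*c^2 + c + 1) (2 : ℤ) :=
        ⟨1, -m, by linarith⟩
      have h16 : IsCoprime (-b^3 + b^2*c + 3*b*c - b + c^3 - 2*c^2 + c + 1) (16 : ℤ) := by
        have := h2.pow_right (n := 4)
        norm_num at this
        exact this
      have hmap := h16.map (Int.castRingHom R)
      have hcast : (Int.castRingHom R) (-b^3 + b^2*c + 3*b*c - b + c^3 - 2*c^2 + c + 1)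
          = -(b:R)^3 + (b:R)^2*(c:R) + 3*(b:R)*(c:R) - (b:R) + (c:R)^3 - 2*(c:R)^2 + (c:R) + 1 := by
        simp only [eq_intCast]
        push_cast
        ring
      have hAD : A * (((c:R)^2 - 2*(c:R) + 1 + (b:R)^2 + (b:R)) + (-((b:R)*(c:R)) - 1)*r
            + ((b:R)^2 - (c:R) + 1)*r^2)
          = -(b:R)^3 + (b:R)^2*(c:R) + 3*(b:R)*(c:R) - (b:R) + (c:R)^3 - 2*(c:R)^2 + (c:R) + 1 := by
        rw [hA]
        linear_combination (((b:R)^3 - 2*(b:R)*(c:R) + (b:R) - 1)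
          + ((b:R)^2 - (c:R) + 1)*r) * h3
      rw [hcast, ← hAD] at hmap
      have h16' : (Int.castRingHom R) (16 : ℤ) = (16 : R) := by simp only [eq_intCast]; norm_num
      rw [h16'] at hmap
      exact hmap.of_mul_left_left
    · -- coprime with β
      have hs : IsCoprime ((1 + b + c : ℤ)) (3 : ℤ) :=
        ((Int.prime_three.coprime_iff_not_dvd).mpr h).symm
      have hmap := hs.map (Int.castRingHom R)
      have hc1 : (Int.castRingHom R) (1 + b + c) = ((1 : R) + (b : R) + (c : R)) := by
        simp only [eq_intCast]; push_cast; ring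
      have hc3 : (Int.castRingHom R) (3 : ℤ) = β * (2 - 2*r + r^2) := by
        rw [hβ]
        simp only [eq_intCast]
        push_cast
        linear_combination (1 - r) * h3
      rw [hc1, hc3] at hmap
      have hsβ : IsCoprime ((1 : R) + (b : R) + (c : R)) β := hmap.of_mul_right_left
      have hAeq : A = ((1 : R) + (b : R) + (c : R))
          + β * ((-1 + r - r^2) * (r + 1 + (b : R))) := by
        rw [hA, hβ]
        linear_combination ((1 + (b:R)) * r + r^2) * h3
      rw [hAeq]
      exact hsβ.add_mul_left_left _
  exact key
end

section
/- Let ℓ ≥ 5 be a prime and let H be a subgroup of GL₂(𝔽_ℓ) whose order is divisible by ℓ (equivalently, H contains an element of order ℓ). Then either H contains SL₂(𝔽_ℓ), or H is contained in a Borel subgroup of GL₂(𝔽_ℓ), i.e., there exists P ∈ GL₂(𝔽_ℓ) such that every element of P·H·P⁻¹ is upper triangular. -/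
open Matrix

set_option linter.unusedTactic false
set_option linter.unreachableTactic false

section Stmt17Aux
variable {p : ℕ} [Fact p.Prime]

/-- Upper unipotent matrix. -/
def Em (p : ℕ) (a : ZMod p) : Matrix (Fin 2) (Fin 2) (ZMod p) := !![1, a; 0, 1]
/-- Lower unipotent matrix. -/
def Lm (p : ℕ) (a : ZMod p) : Matrix (Fin 2) (Fin 2) (ZMod p) := !![1, 0; a, 1]

lemma Em_mul (a b : ZMod p) : Em p a * Em p b = Em p (a+b) := by
  simp [Em, Matrix.mul_fin_two]; ring

lemma Lm_mul (a b : ZMod p) : Lm p a * Lm p b = Lm p (a+b) := by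
  simp [Lm, Matrix.mul_fin_two]

/-- Upper unipotent as element of `GL₂`. -/
def Egl (a : ZMod p) : GL (Fin 2) (ZMod p) :=
  ⟨Em p a, Em p (-a), by rw [Em_mul, Matrix.one_fin_two]; simp [Em],
    by rw [Em_mul, Matrix.one_fin_two]; simp [Em]⟩

/-- Lower unipotent as element of `GL₂`. -/
def Lgl (a : ZMod p) : GL (Fin 2) (ZMod p) :=
  ⟨Lm p a, Lm p (-a), by rw [Lm_mul, Matrix.one_fin_two]; simp [Lm],
    by rw [Lm_mul, Matrix.one_fin_two]; simp [Lm]⟩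

lemma Egl_coe (a : ZMod p) :
    ((Egl a : GL (Fin 2) (ZMod p)) : Matrix (Fin 2) (Fin 2) (ZMod p)) = Em p a := rfl
lemma Lgl_coe (a : ZMod p) :
    ((Lgl a : GL (Fin 2) (ZMod p)) : Matrix (Fin 2) (Fin 2) (ZMod p)) = Lm p a := rfl

lemma Egl_mul (a b : ZMod p) : (Egl a * Egl b : GL (Fin 2) (ZMod p)) = Egl (a+b) :=
  Units.ext (Em_mul a b)
lemma Lgl_mul (a b : ZMod p) : (Lgl a * Lgl b : GL (Fin 2) (ZMod p)) = Lgl (a+b) :=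
  Units.ext (Lm_mul a b)

lemma Egl_pow (a : ZMod p) (k : ℕ) : (Egl a)^k = Egl ((k : ZMod p) * a) := by
  induction k with
  | zero =>
    refine Units.ext ?_
    show (1 : Matrix (Fin 2) (Fin 2) (ZMod p)) = Em p _
    simp [Em, Matrix.one_fin_two]
  | succ n ih => rw [pow_succ, ih, Egl_mul]; push_cast; ring_nf

lemma Lgl_pow (a : ZMod p) (k : ℕ) : (Lgl a)^k = Lgl ((k : ZMod p) * a) := by
  induction k with
  | zero =>
    refine Units.ext ?_
    show (1 : Matrix (Fin 2) (Fin 2) (ZMod p)) = Lm p _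
    simp [Lm, Matrix.one_fin_two]
  | succ n ih => rw [pow_succ, ih, Lgl_mul]; push_cast; ring_nf

lemma mem_of_det_one_aux (K : Subgroup (GL (Fin 2) (ZMod p)))
    (hE : ∀ a, Egl a ∈ K) (hL : ∀ a, Lgl a ∈ K) (A : GL (Fin 2) (ZMod p))
    (hdet : Matrix.det (A : Matrix (Fin 2) (Fin 2) (ZMod p)) = 1)
    (hc : (A : Matrix (Fin 2) (Fin 2) (ZMod p)) 1 0 ≠ 0) : A ∈ K := by
  set M := (A : Matrix (Fin 2) (Fin 2) (ZMod p)) with hM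
  set a := M 0 0 with ha; set b := M 0 1 with hb
  set c := M 1 0 with hc'; set d := M 1 1 with hd
  rw [Matrix.det_fin_two] at hdet
  set s := (a-1)/c with hs0
  set t := (d-1)/c with ht0
  have hs : s * c = a - 1 := by rw [hs0]; field_simp
  have ht : c * t = d - 1 := by rw [ht0]; field_simp
  have key : A = Egl s * Lgl c * Egl t := by
    refine Units.ext ?_
    show M = Em p _ * Lm p _ * Em p _
    rw [Matrix.eta_fin_two M]
    simp only [Em, Lm, Matrix.mul_fin_two]
    have e1 : (1 * 1 + s * c) * 1 + (1 * 0 + s * 1) * 0 = a := by linear_combination hs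
    have e2 : (1 * 1 + s * c) * t + (1 * 0 + s * 1) * 1 = b := by
      have h2 : ((1 * 1 + s * c) * t + (1 * 0 + s * 1) * 1) * c = b * c := by
        linear_combination (t*c)*hs + a*ht + hs + hdet
      exact mul_right_cancel₀ hc h2
    have e3 : (0 * 1 + 1 * c) * 1 + (0 * 0 + 1 * 1) * 0 = c := by ring
    have e4 : (0 * 1 + 1 * c) * t + (0 * 0 + 1 * 1) * 1 = d := by linear_combination ht
    rw [e1, e2, e3, e4, ← ha, ← hb, ← hc', ← hd]
  rw [key]
  exact mul_mem (mul_mem (hE _) (hL _)) (hE _)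

lemma det_Lm (a : ZMod p) : Matrix.det (Lm p a) = 1 := by simp [Lm, Matrix.det_fin_two]

lemma mem_of_det_one (K : Subgroup (GL (Fin 2) (ZMod p)))
    (hE : ∀ a, Egl a ∈ K) (hL : ∀ a, Lgl a ∈ K) (A : GL (Fin 2) (ZMod p))
    (hdet : Matrix.det (A : Matrix (Fin 2) (Fin 2) (ZMod p)) = 1) : A ∈ K := by
  by_cases hc : (A : Matrix (Fin 2) (Fin 2) (ZMod p)) 1 0 ≠ 0
  · exact mem_of_det_one_aux K hE hL A hdet hc
  push_neg at hc
  set B := A * Lgl 1 with hB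
  have hBcoe : (B : Matrix (Fin 2) (Fin 2) (ZMod p))
      = (A : Matrix (Fin 2) (Fin 2) (ZMod p)) * Lm p 1 := rfl
  have hdetB : Matrix.det (B : Matrix (Fin 2) (Fin 2) (ZMod p)) = 1 := by
    rw [hBcoe, Matrix.det_mul, det_Lm, hdet, mul_one]
  have hd : (A : Matrix (Fin 2) (Fin 2) (ZMod p)) 1 1 ≠ 0 := by
    intro h
    rw [Matrix.det_fin_two, h, hc] at hdet
    simp at hdet
  have hBc : (B : Matrix (Fin 2) (Fin 2) (ZMod p)) 1 0 ≠ 0 := by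
    rw [hBcoe]
    simp [Matrix.mul_apply, Fin.sum_univ_two, Lm, hc, hd]
  have hBK : B ∈ K := mem_of_det_one_aux K hE hL B hdetB hBc
  have : A = B * (Lgl 1)⁻¹ := by rw [hB]; group
  rw [this]
  exact mul_mem hBK (inv_mem (hL 1))

lemma sq_eq (N : Matrix (Fin 2) (Fin 2) (ZMod p)) (hdet : Matrix.det N = 0) :
    N * N = (N 0 0 + N 1 1) • N := by
  rw [Matrix.det_fin_two] at hdet
  ext i j
  fin_cases i <;> fin_cases j <;>
    simp [Matrix.mul_apply, Fin.sum_univ_two, Matrix.smul_apply, smul_eq_mul]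
  all_goals (try ring)
  all_goals (try linear_combination hdet)
  all_goals (try linear_combination -hdet)
  all_goals (try linear_combination (2:ZMod p)*hdet)
  all_goals (try linear_combination (-2:ZMod p)*hdet)

lemma pow_formula (N : Matrix (Fin 2) (Fin 2) (ZMod p)) (t : ZMod p)
    (h : N * N = t • N) (k : ℕ) : N ^ (k+1) = t^k • N := by
  induction k with
  | zero => simp
  | succ n ih =>
    rw [pow_succ, ih, Matrix.smul_mul, h, smul_smul, pow_succ]

lemma Nsq_zero (N : Matrix (Fin 2) (Fin 2) (ZMod p)) (hp : N ^ p = 0) (hN : N ≠ 0) :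
    N * N = 0 := by
  have hdet : Matrix.det N = 0 := by
    have : (Matrix.det N)^p = 0 := by rw [← Matrix.det_pow, hp, Matrix.det_zero]
    exact pow_eq_zero_iff (Fact.out : p.Prime).ne_zero |>.mp this
  have hsq := sq_eq N hdet
  set t := N 0 0 + N 1 1 with ht
  have h1 : t ^ (p-1) • N = 0 := by
    rw [← pow_formula N t hsq (p-1)]
    have : p - 1 + 1 = p := Nat.succ_pred_eq_of_pos (Fact.out : p.Prime).pos
    rw [this, hp]
  have h2 : t ^ (p-1) = 0 := by
    rcases smul_eq_zero.mp h1 with h | h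
    · exact h
    · exact absurd h hN
  have hp2 := (Fact.out : p.Prime).two_le
  have h3 : t = 0 := pow_eq_zero_iff (by omega : p - 1 ≠ 0) |>.mp h2
  rw [hsq, h3, zero_smul]

lemma jordan_aux (A N : Matrix (Fin 2) (Fin 2) (ZMod p)) (hN : N = A - 1)
    (hNN : N * N = 0) (v0 v1 : ZMod p)
    (hw : N 0 0 * v0 + N 0 1 * v1 ≠ 0 ∨ N 1 0 * v0 + N 1 1 * v1 ≠ 0) :
    ∃ P : Matrix (Fin 2) (Fin 2) (ZMod p), Matrix.det P ≠ 0 ∧ A * P = P * Em p 1 := by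
  set n00 := N 0 0 with hn00; set n01 := N 0 1 with hn01
  set n10 := N 1 0 with hn10; set n11 := N 1 1 with hn11
  have q00 : n00*n00 + n01*n10 = 0 := by
    have := congrFun (congrFun hNN 0) 0
    simpa [Matrix.mul_apply, Fin.sum_univ_two] using this
  have q01 : n00*n01 + n01*n11 = 0 := by
    have := congrFun (congrFun hNN 0) 1
    simpa [Matrix.mul_apply, Fin.sum_univ_two] using this
  have q10 : n10*n00 + n11*n10 = 0 := by
    have := congrFun (congrFun hNN 1) 0
    simpa [Matrix.mul_apply, Fin.sum_univ_two] using this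
  have q11 : n10*n01 + n11*n11 = 0 := by
    have := congrFun (congrFun hNN 1) 1
    simpa [Matrix.mul_apply, Fin.sum_univ_two] using this
  set w0 := n00 * v0 + n01 * v1 with hw0
  set w1 := n10 * v0 + n11 * v1 with hw1
  refine ⟨!![w0, v0; w1, v1], ?_, ?_⟩
  · rw [Matrix.det_fin_two_of]
    intro hdet0
    have e0 : w0 * w0 = 0 := by
      rw [hw0]; linear_combination v0*v0*q00 + v0*v1*q01 + n01*hdet0
    have e1 : w1 * w1 = 0 := by
      rw [hw1]; linear_combination v0*v1*q10 + v1*v1*q11 - n10*hdet0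
    rcases hw with h | h
    · exact h (pow_eq_zero_iff (n := 2) (by norm_num) |>.mp (by rw [sq]; exact e0))
    · exact h (pow_eq_zero_iff (n := 2) (by norm_num) |>.mp (by rw [sq]; exact e1))
  · have hA : A = N + 1 := by rw [hN, sub_add_cancel]
    have hNw0 : n00*w0 + n01*w1 = 0 := by
      rw [hw0, hw1]; linear_combination v0*q00 + v1*q01
    have hNw1 : n10*w0 + n11*w1 = 0 := by
      rw [hw0, hw1]; linear_combination v0*q10 + v1*q11
    rw [hA]
    ext i j
    fin_cases i <;> fin_cases j <;>
      simp [Em, Matrix.mul_apply, Fin.sum_univ_two, Matrix.one_apply, ← hn00, ← hn01, ← hn10,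
        ← hn11]
    all_goals (try ring)
    all_goals (try linear_combination hNw0)
    all_goals (try linear_combination hNw1)
    all_goals (try linear_combination hw0)
    all_goals (try linear_combination hw1)
    all_goals (try linear_combination hNw0 + hw0)
    all_goals (try linear_combination hNw1 + hw1)

lemma jordan (A : Matrix (Fin 2) (Fin 2) (ZMod p)) (h1 : A ^ p = 1) (h2 : A ≠ 1) :
    ∃ P : Matrix (Fin 2) (Fin 2) (ZMod p), Matrix.det P ≠ 0 ∧ A * P = P * Em p 1 := by
  set N := A - 1 with hN
  have hNp : N ^ p = 0 := by
    rw [hN, sub_pow_char_of_commute p (Commute.one_right A), h1, one_pow, sub_self]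
  have hNne : N ≠ 0 := fun h => h2 (by rw [← sub_add_cancel A 1, ← hN, h, zero_add])
  have hNN : N * N = 0 := Nsq_zero N hNp hNne
  have hex : ∃ i j, N i j ≠ 0 := by
    by_contra h
    push_neg at h
    exact hNne (Matrix.ext fun i j => h i j)
  obtain ⟨i, j, hij⟩ := hex
  fin_cases i <;> fin_cases j
  · exact jordan_aux A N hN hNN 1 0 (Or.inl (by simpa using hij))
  · exact jordan_aux A N hN hNN 0 1 (Or.inl (by simpa using hij))
  · exact jordan_aux A N hN hNN 1 0 (Or.inr (by simpa using hij))
  · exact jordan_aux A N hN hNN 0 1 (Or.inr (by simpa using hij))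

end Stmt17Aux

/-- For `ℓ ≥ 5`, a subgroup of `GL₂(𝔽_ℓ)` of order divisible by `ℓ` either contains
`SL₂(𝔽_ℓ)` or is contained in a Borel subgroup (is simultaneously upper-triangularizable). -/
theorem stmt17 (p : ℕ) [Fact p.Prime] (hp : 5 ≤ p)
    (H : Subgroup (GL (Fin 2) (ZMod p))) (hcard : p ∣ Nat.card H) :
    (∀ A : GL (Fin 2) (ZMod p),
        Matrix.det (A : Matrix (Fin 2) (Fin 2) (ZMod p)) = 1 → A ∈ H) ∨
    (∃ P : GL (Fin 2) (ZMod p), ∀ g ∈ H,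
        ((P * g * P⁻¹ : GL (Fin 2) (ZMod p)) : Matrix (Fin 2) (Fin 2) (ZMod p)) 1 0 = 0) := by
  -- Get an element of order p in H (Cauchy)
  haveI : Fintype ↥H := Fintype.ofFinite ↥H
  have hcard' : p ∣ Fintype.card H := by rwa [← Nat.card_eq_fintype_card]
  obtain ⟨g, hg⟩ := exists_prime_orderOf_dvd_card p hcard'
  have hgord : orderOf (g : GL (Fin 2) (ZMod p)) = p :=
    (orderOf_injective H.subtype H.subtype_injective g).trans hg
  have hgp : ((g : GL (Fin 2) (ZMod p)))^p = 1 := by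
    have h' := pow_orderOf_eq_one (g : GL (Fin 2) (ZMod p))
    rwa [hgord] at h'
  have hgne : (g : GL (Fin 2) (ZMod p)) ≠ 1 := by
    intro h
    rw [h, orderOf_one] at hgord
    have := (Fact.out : p.Prime).two_le
    omega
  set gl := (g : GL (Fin 2) (ZMod p)) with hgl
  -- matrix level
  have hMp : ((gl : Matrix (Fin 2) (Fin 2) (ZMod p)))^p = 1 := by
    rw [← Units.val_pow_eq_pow_val, hgp, Units.val_one]
  have hMne : (gl : Matrix (Fin 2) (Fin 2) (ZMod p)) ≠ 1 := fun h => hgne (Units.ext h)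
  obtain ⟨P, hPdet, hPC⟩ := jordan (gl : Matrix (Fin 2) (Fin 2) (ZMod p)) hMp hMne
  have hPunit : IsUnit P := (Matrix.isUnit_iff_isUnit_det P).mpr (isUnit_iff_ne_zero.mpr hPdet)
  obtain ⟨Q, hQ⟩ := hPunit
  -- Q : GL, ↑Q = P ; relation gl * Q = Q * Egl 1
  have hrel : gl * Q = Q * Egl 1 := by
    refine Units.ext ?_
    rw [Units.val_mul, Units.val_mul, hQ, Egl_coe]
    exact hPC
  have hconj : Q⁻¹ * gl * Q = Egl 1 := by
    rw [mul_assoc, hrel, ← mul_assoc, inv_mul_cancel, one_mul]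
  -- conjugated subgroup
  set K := Subgroup.map (MulAut.conj Q⁻¹).toMonoidHom H with hK
  have hmemK : ∀ x : GL (Fin 2) (ZMod p), x ∈ K ↔ ∃ h ∈ H, Q⁻¹ * h * Q = x := by
    intro x
    constructor
    · rintro ⟨h, hh, rfl⟩
      exact ⟨h, hh, by simp [MulAut.conj_apply]⟩
    · rintro ⟨h, hh, rfl⟩
      exact ⟨h, hh, by simp [MulAut.conj_apply]⟩
  have hUK : Egl 1 ∈ K := (hmemK _).mpr ⟨gl, g.2, hconj⟩
  have hE : ∀ a : ZMod p, Egl a ∈ K := by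
    intro a
    have := pow_mem hUK a.val
    rwa [Egl_pow, mul_one, ZMod.natCast_val, ZMod.cast_id] at this
  by_cases hB : ∀ k ∈ K, ((k : GL (Fin 2) (ZMod p)) : Matrix (Fin 2) (Fin 2) (ZMod p)) 1 0 = 0
  · -- Borel case
    right
    refine ⟨Q⁻¹, fun h hh => ?_⟩
    have : Q⁻¹ * h * Q ∈ K := (hmemK _).mpr ⟨h, hh, rfl⟩
    have := hB _ this
    rwa [show Q⁻¹ * h * (Q⁻¹)⁻¹ = Q⁻¹ * h * Q by rw [inv_inv]]
  · -- SL₂ case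
    push_neg at hB
    obtain ⟨k, hkK, hkc⟩ := hB
    -- entries of k
    set Mk := ((k : GL (Fin 2) (ZMod p)) : Matrix (Fin 2) (Fin 2) (ZMod p)) with hMk
    set x := Mk 0 0 with hx; set y := Mk 0 1 with hy
    set c := Mk 1 0 with hc; set z := Mk 1 1 with hz
    have hdk : Matrix.det Mk ≠ 0 := by
      have : IsUnit (Matrix.det Mk) := (Matrix.isUnit_iff_isUnit_det Mk).mp k.isUnit
      exact this.ne_zero
    rw [Matrix.det_fin_two, ← hx, ← hy, ← hc, ← hz] at hdk
    set d := x * z - y * c with hd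
    set b := -x / c with hb0
    set m := -(c*c) / d with hm0
    have hbc : b * c = -x := by rw [hb0]; field_simp
    have hmd : m * d = -(c*c) := by rw [hm0]; field_simp
    have hmne : m ≠ 0 := by
      rw [hm0]
      exact div_ne_zero (neg_ne_zero.mpr (mul_ne_zero hkc hkc)) hdk
    -- the key conjugation identity
    have hkey : Lgl m * (Egl b * k) = (Egl b * k) * Egl 1 := by
      have hyb : (y + b * z) * c = -d := by
        rw [hb0, hd]; field_simp; ring
      have h11 : m * (y + b * z) = c := by
        refine mul_right_cancel₀ hkc ?_
        linear_combination m*hyb - hmd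
      have hxbc : x + b * c = 0 := by rw [hb0]; field_simp; ring
      refine Units.ext ?_
      show Lm p m * (Em p b * Mk) = (Em p b * Mk) * Em p 1
      rw [Matrix.eta_fin_two Mk, ← hx, ← hy, ← hc, ← hz]
      simp only [Em, Lm, Matrix.mul_fin_two]
      have e00 : (1:ZMod p) * (1 * x + b * c) + 0 * (0 * x + 1 * c)
          = (1 * x + b * c) * 1 + (1 * y + b * z) * 0 := by ring
      have e01 : (1:ZMod p) * (1 * y + b * z) + 0 * (0 * y + 1 * z)
          = (1 * x + b * c) * 1 + (1 * y + b * z) * 1 := by linear_combination -hxbc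
      have e10 : m * (1 * x + b * c) + 1 * (0 * x + 1 * c)
          = (0 * x + 1 * c) * 1 + (0 * y + 1 * z) * 0 := by linear_combination m*hxbc
      have e11 : m * (1 * y + b * z) + 1 * (0 * y + 1 * z)
          = (0 * x + 1 * c) * 1 + (0 * y + 1 * z) * 1 := by linear_combination h11
      rw [e00, e01, e10, e11]
    have hLmK : Lgl m ∈ K := by
      have h1 : Lgl m = (Egl b * k) * Egl 1 * (Egl b * k)⁻¹ := by
        rw [← hkey]; group
      rw [h1]
      exact mul_mem (mul_mem (mul_mem (hE b) hkK) hUK) (inv_mem (mul_mem (hE b) hkK))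
    have hL : ∀ a : ZMod p, Lgl a ∈ K := by
      intro a
      have := pow_mem hLmK (a / m).val
      rwa [Lgl_pow, ZMod.natCast_val, ZMod.cast_id, div_mul_cancel₀ a hmne] at this
    left
    intro A hA
    have hdconj : Matrix.det ((Q⁻¹ * A * Q : GL (Fin 2) (ZMod p)) :
        Matrix (Fin 2) (Fin 2) (ZMod p)) = 1 := by
      show Matrix.det (((Q⁻¹ : GL (Fin 2) (ZMod p)) : Matrix (Fin 2) (Fin 2) (ZMod p)) *
        ((A : Matrix (Fin 2) (Fin 2) (ZMod p))) * ((Q : Matrix (Fin 2) (Fin 2) (ZMod p)))) = 1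
      rw [Matrix.det_mul, Matrix.det_mul, hA, mul_one]
      have : ((Q⁻¹ : GL (Fin 2) (ZMod p)) : Matrix (Fin 2) (Fin 2) (ZMod p)) *
          ((Q : GL (Fin 2) (ZMod p)) : Matrix (Fin 2) (Fin 2) (ZMod p)) = 1 := by
        rw [← Units.val_mul, inv_mul_cancel, Units.val_one]
      calc Matrix.det ((Q⁻¹ : GL (Fin 2) (ZMod p)) : Matrix (Fin 2) (Fin 2) (ZMod p)) *
            Matrix.det ((Q : GL (Fin 2) (ZMod p)) : Matrix (Fin 2) (Fin 2) (ZMod p))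
          = Matrix.det (((Q⁻¹ : GL (Fin 2) (ZMod p)) : Matrix (Fin 2) (Fin 2) (ZMod p)) *
            ((Q : GL (Fin 2) (ZMod p)) : Matrix (Fin 2) (Fin 2) (ZMod p))) := by
            rw [Matrix.det_mul]
        _ = 1 := by rw [this, Matrix.det_one]
    have : Q⁻¹ * A * Q ∈ K := mem_of_det_one K hE hL _ hdconj
    obtain ⟨h, hh, heq⟩ := (hmemK _).mp this
    have : h = A := by
      have := heq
      have h1 : Q * (Q⁻¹ * h * Q) * Q⁻¹ = Q * (Q⁻¹ * A * Q) * Q⁻¹ := by rw [heq]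
      have h2 : Q * (Q⁻¹ * h * Q) * Q⁻¹ = h := by group
      have h3 : Q * (Q⁻¹ * A * Q) * Q⁻¹ = A := by group
      rw [h2, h3] at h1
      exact h1
    rwa [← this]
end
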